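/- arXiv:1603.01288 — 2 statements merged into one kernel-verified Lean document; each statement's English description precedes it below -/
import Mathlib

section
/- Let X be a Banach function space in L⁰(Ω, Σ, ℙ) (in particular possessing a weak unit u > 0). Then any family {x*_γ}_{γ∈Γ} of positive order continuous functionals on X admits a countable subfamily {x*_{γ_n}} such that for every x ∈ X₊: if x*_{γ_n}(x) = 0 for all n, then x*_γ(x) = 0 for all γ ∈ Γ. -/
open MeasureTheory Filter

universe u v

variable {Ω : Type u}

/-- Order convergence of a net in a lattice-ordered group. -/
def OrderConvNet {E : Type v} [Lattice E] [AddCommGroup E] {ι : Type*} [Preorder ι]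
    (y : ι → E) (x : E) : Prop :=
  ∃ z : ι → E, Antitone z ∧ IsGLB (Set.range z) 0 ∧ ∀ᶠ a in atTop, |y a - x| ≤ z a

/-- A functional is order continuous if it carries nets order-converging to `0` to nets
converging to `0` in `ℝ`. -/
def OrderContinuousFun {E : Type v} [Lattice E] [AddCommGroup E] (φ : E → ℝ) : Prop :=
  ∀ (ι : Type v) (_ : Preorder ι) (_ : IsDirected ι (· ≤ ·)) (_ : Nonempty ι)
    (y : ι → E), OrderConvNet y 0 → Tendsto (fun a => φ (y a)) atTop (nhds 0)

/-- The Banach lattice `E` is a Banach function space in `L⁰(μ)` via `T`, i.e. `T` is a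
linear order embedding of `E` onto an ideal (solid subspace) of `L⁰`. -/
structure IsBFSvia {m0 : MeasurableSpace Ω} (μ : Measure Ω) (E : Type v)
    [NormedAddCommGroup E] [Lattice E] [HasSolidNorm E] [IsOrderedAddMonoid E] [NormedSpace ℝ E] [CompleteSpace E]
    (T : E →ₗ[ℝ] (Ω →ₘ[μ] ℝ)) : Prop where
  ord : ∀ x y : E, x ≤ y ↔ T x ≤ T y
  solid : ∀ (h : Ω →ₘ[μ] ℝ) (x : E), |h| ≤ |T x| → ∃ e : E, T e = h


section OC

variable {E : Type v} [Lattice E] [AddCommGroup E] [CovariantClass E E (· + ·) (· ≤ ·)]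

theorem OrderContinuousFun.tendsto_nat {φ : E → ℝ} (h : OrderContinuousFun φ) {z : ℕ → E}
    (hz : Antitone z) (hglb : IsGLB (Set.range z) 0) (hnn : ∀ n, 0 ≤ z n) :
    Tendsto (fun n => φ (z n)) atTop (nhds 0) := by
  have key := h (ULift.{v} ℕ) inferInstance inferInstance inferInstance
    (fun a => z a.down) ?_
  · have hup : Tendsto (fun n : ℕ => (ULift.up n : ULift.{v} ℕ)) atTop atTop :=
      tendsto_atTop_atTop.2 fun b => ⟨b.down, fun a ha => ha⟩
    exact key.comp hup
  · refine ⟨fun a => z a.down, fun a b hab => hz hab, ?_, ?_⟩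
    · have : Set.range (fun a : ULift.{v} ℕ => z a.down) = Set.range z := by
        ext w
        constructor
        · rintro ⟨a, rfl⟩; exact ⟨a.down, rfl⟩
        · rintro ⟨n, rfl⟩; exact ⟨ULift.up n, rfl⟩
      rw [this]; exact hglb
    · exact Eventually.of_forall fun a => by
        show |z a.down - 0| ≤ z a.down
        rw [sub_zero, abs_of_nonneg (hnn a.down)]


end OC

section Aux
variable {m0 : MeasurableSpace Ω} {μ : Measure Ω}
  {E : Type v} [NormedAddCommGroup E] [Lattice E] [HasSolidNorm E] [IsOrderedAddMonoid E] [NormedSpace ℝ E] [CompleteSpace E]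
  {T : E →ₗ[ℝ] (Ω →ₘ[μ] ℝ)}

theorem IsBFSvia.inj (hT : IsBFSvia μ E T) : Function.Injective T := fun a b hab =>
  le_antisymm ((hT.ord a b).2 hab.le) ((hT.ord b a).2 hab.ge)

theorem IsBFSvia.mono (hT : IsBFSvia μ E T) {a b : E} (h : a ≤ b) : T a ≤ T b :=
  (hT.ord a b).1 h

theorem IsBFSvia.map_inf (hT : IsBFSvia μ E T) (a b : E) : T (a ⊓ b) = T a ⊓ T b := by
  have h1 : T (a ⊓ b) ≤ T a ⊓ T b :=
    le_inf (hT.mono inf_le_left) (hT.mono inf_le_right)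
  set c : E := |a| + |b| with hc
  have hac : a ≤ c := le_add_of_le_of_nonneg (le_abs_self a) (abs_nonneg b)
  have hnac : -a ≤ c := le_add_of_le_of_nonneg (neg_le_abs a) (abs_nonneg b)
  have hbc : b ≤ c := le_add_of_nonneg_of_le (abs_nonneg a) (le_abs_self b)
  have hnbc : -b ≤ c := le_add_of_nonneg_of_le (abs_nonneg a) (neg_le_abs b)
  have hc0 : (0:E) ≤ c := add_nonneg (abs_nonneg a) (abs_nonneg b)
  have key : |T a ⊓ T b| ≤ |T c| := by
    rw [← AEEqFun.coeFn_le]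
    have e1 := AEEqFun.coeFn_abs (T a ⊓ T b)
    have e2 := AEEqFun.coeFn_inf (T a) (T b)
    have e3 := AEEqFun.coeFn_abs (T c)
    have e4 : ⇑(T a) ≤ᵐ[μ] ⇑(T c) := AEEqFun.coeFn_le.2 (hT.mono hac)
    have e5 : ⇑(T (-a)) ≤ᵐ[μ] ⇑(T c) := AEEqFun.coeFn_le.2 (hT.mono hnac)
    have e6 : ⇑(T b) ≤ᵐ[μ] ⇑(T c) := AEEqFun.coeFn_le.2 (hT.mono hbc)
    have e7 : ⇑(T (-b)) ≤ᵐ[μ] ⇑(T c) := AEEqFun.coeFn_le.2 (hT.mono hnbc)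
    have e8 : ⇑(T (-a)) =ᵐ[μ] fun ω => -(⇑(T a) ω) := by
      rw [map_neg]; exact AEEqFun.coeFn_neg (T a)
    have e9 : ⇑(T (-b)) =ᵐ[μ] fun ω => -(⇑(T b) ω) := by
      rw [map_neg]; exact AEEqFun.coeFn_neg (T b)
    filter_upwards [e1, e2, e3, e4, e5, e6, e7, e8, e9] with ω h1 h2 h3 h4 h5 h6 h7 h8 h9
    rw [h1, h2, h3]
    rw [h8] at h5; rw [h9] at h7
    have ha' : |⇑(T a) ω| ≤ ⇑(T c) ω := abs_le.2 ⟨by linarith, h4⟩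
    have hb' : |⇑(T b) ω| ≤ ⇑(T c) ω := abs_le.2 ⟨by linarith, h6⟩
    have : |⇑(T a) ω ⊓ ⇑(T b) ω| ≤ ⇑(T c) ω := by
      rcases min_cases (⇑(T a) ω) (⇑(T b) ω) with ⟨h, _⟩ | ⟨h, _⟩ <;>
        simp only [h] <;> assumption
    exact this.trans (le_abs_self _)
  obtain ⟨w, hw⟩ := hT.solid _ c key
  have hw1 : w ≤ a := (hT.ord _ _).2 (hw ▸ inf_le_left)
  have hw2 : w ≤ b := (hT.ord _ _).2 (hw ▸ inf_le_right)
  exact le_antisymm h1 (hw ▸ hT.mono (le_inf hw1 hw2))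


theorem IsBFSvia.coeFn_nonneg (hT : IsBFSvia μ E T) {x : E} (hx : 0 ≤ x) :
    (0 : Ω → ℝ) ≤ᵐ[μ] ⇑(T x) := by
  have h : T 0 ≤ T x := hT.mono hx
  rw [map_zero] at h
  filter_upwards [AEEqFun.coeFn_le.2 h, AEEqFun.coeFn_zero (β := ℝ) (μ := μ)] with ω h1 h2
  calc (0:ℝ) = ⇑(0 : Ω →ₘ[μ] ℝ) ω := h2.symm
  _ ≤ ⇑(T x) ω := h1


/-- a.e. on the set where the weak unit vanishes, every element of `E` vanishes. -/
theorem IsBFSvia.vanish (hT : IsBFSvia μ E T) (u : E) (hu : 0 ≤ u)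
    (hweak : ∀ x : E, 0 ≤ x → x ⊓ u = 0 → x = 0)
    (gu : Ω → ℝ) (hgm : Measurable gu) (hgae : gu =ᵐ[μ] ⇑(T u))
    (x : E) (hx : 0 ≤ x) :
    ∀ᵐ ω ∂μ, gu ω = 0 → ⇑(T x) ω ≤ 0 := by
  classical
  obtain ⟨gx, hgxm, hgxae⟩ : ∃ gx : Ω → ℝ, Measurable gx ∧ ⇑(T x) =ᵐ[μ] gx :=
    ⟨_, (T x).aestronglyMeasurable.aemeasurable.measurable_mk,
      (T x).aestronglyMeasurable.aemeasurable.ae_eq_mk⟩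
  set B : Set Ω := {ω | gu ω = 0} with hB
  have hBm : MeasurableSet B := hgm (measurableSet_singleton 0)
  have hxnn := hT.coeFn_nonneg hx
  set h : Ω →ₘ[μ] ℝ := AEEqFun.mk (B.indicator gx) ((hgxm.indicator hBm).aestronglyMeasurable)
    with hh
  have habs : |h| ≤ |T x| := by
    rw [← AEEqFun.coeFn_le]
    filter_upwards [AEEqFun.coeFn_abs h, AEEqFun.coeFn_abs (T x),
      (AEEqFun.coeFn_mk _ _ : ⇑h =ᵐ[μ] B.indicator gx), hgxae] with ω e1 e2 e3 e4
    rw [e1, e2, e3]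
    by_cases hω : ω ∈ B
    · rw [Set.indicator_of_mem hω, ← e4]
    · rw [Set.indicator_of_notMem hω, abs_zero]; exact abs_nonneg _
  obtain ⟨e, he⟩ := hT.solid h x habs
  have he0 : 0 ≤ e := by
    rw [hT.ord, map_zero, he, ← AEEqFun.coeFn_le]
    filter_upwards [AEEqFun.coeFn_zero (β := ℝ) (μ := μ),
      (AEEqFun.coeFn_mk _ _ : ⇑h =ᵐ[μ] B.indicator gx), hxnn, hgxae] with ω e1 e2 e3 e4
    rw [e1, e2, Pi.zero_apply]
    by_cases hω : ω ∈ B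
    · rw [Set.indicator_of_mem hω, ← e4]; simpa using e3
    · rw [Set.indicator_of_notMem hω]
  have hinf : e ⊓ u = 0 := by
    refine le_antisymm ?_ (le_inf he0 hu)
    rw [hT.ord, map_zero, hT.map_inf, he, ← AEEqFun.coeFn_le]
    filter_upwards [AEEqFun.coeFn_zero (β := ℝ) (μ := μ),
      AEEqFun.coeFn_inf h (T u),
      (AEEqFun.coeFn_mk _ _ : ⇑h =ᵐ[μ] B.indicator gx), hgae] with ω e1 e2 e3 e4
    rw [e1, e2, e3, Pi.zero_apply]
    by_cases hω : ω ∈ B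
    · have h0 : gu ω = 0 := hω
      exact inf_le_of_right_le (by rw [← e4, h0])
    · rw [Set.indicator_of_notMem hω]; exact inf_le_left
  have he' : e = 0 := hweak e he0 hinf
  have hzero : B.indicator gx =ᵐ[μ] 0 := by
    have : h = 0 := by rw [← he, he', map_zero]
    calc B.indicator gx =ᵐ[μ] ⇑h := (AEEqFun.coeFn_mk _ _).symm
    _ = ⇑(0 : Ω →ₘ[μ] ℝ) := by rw [this]
    _ =ᵐ[μ] 0 := AEEqFun.coeFn_zero
  filter_upwards [hzero, hgxae] with ω e1 e2 hgu0
  have hωB : ω ∈ B := hgu0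
  rw [e2]
  have : B.indicator gx ω = gx ω := Set.indicator_of_mem hωB gx
  rw [this] at e1
  exact le_of_eq e1


open scoped Classical in

noncomputable def IsBFSvia.USel (hT : IsBFSvia μ E T) (u : E) (gu : Ω → ℝ)
    (hgm : Measurable gu) (hgae : gu =ᵐ[μ] ⇑(T u)) (A : Set Ω) : E :=
  if hA : MeasurableSet A then
    (hT.solid (AEEqFun.mk (A.indicator gu) ((hgm.indicator hA).aestronglyMeasurable)) u
      (by
        rw [← AEEqFun.coeFn_le]
        filter_upwards [AEEqFun.coeFn_abs
            (AEEqFun.mk (A.indicator gu) ((hgm.indicator hA).aestronglyMeasurable)),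
          AEEqFun.coeFn_abs (T u),
          (AEEqFun.coeFn_mk (A.indicator gu) ((hgm.indicator hA).aestronglyMeasurable)),
          hgae] with ω e1 e2 e3 e4
        rw [e1, e2, e3, ← e4]
        by_cases hω : ω ∈ A
        · rw [Set.indicator_of_mem hω]
        · rw [Set.indicator_of_notMem hω, abs_zero]; exact abs_nonneg _)).choose
  else 0

variable (hT : IsBFSvia μ E T) {u : E} {gu : Ω → ℝ}
  {hgm : Measurable gu} {hgae : gu =ᵐ[μ] ⇑(T u)}

theorem IsBFSvia.USel_spec {A : Set Ω} (hA : MeasurableSet A) :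
    ⇑(T (hT.USel u gu hgm hgae A)) =ᵐ[μ] A.indicator gu := by
  classical
  rw [IsBFSvia.USel, dif_pos hA]
  generalize_proofs h1 h2 h3 h4 h5
  rw [h5.choose_spec]
  exact AEEqFun.coeFn_mk _ _

theorem IsBFSvia.USel_nonneg (hgnn : ∀ ω, 0 ≤ gu ω) {A : Set Ω} (hA : MeasurableSet A) :
    0 ≤ hT.USel u gu hgm hgae A := by
  rw [hT.ord, map_zero, ← AEEqFun.coeFn_le]
  filter_upwards [AEEqFun.coeFn_zero (β := ℝ) (μ := μ), hT.USel_spec hA] with ω e1 e2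
  rw [e1, e2, Pi.zero_apply]
  exact Set.indicator_apply_nonneg fun _ => hgnn ω

theorem IsBFSvia.USel_mono (hgnn : ∀ ω, 0 ≤ gu ω) {A B : Set Ω} (hA : MeasurableSet A)
    (hB : MeasurableSet B) (hAB : A ⊆ B) :
    hT.USel u gu hgm hgae A ≤ hT.USel u gu hgm hgae B := by
  rw [hT.ord, ← AEEqFun.coeFn_le]
  filter_upwards [hT.USel_spec hA, hT.USel_spec hB] with ω e1 e2
  rw [e1, e2]
  by_cases hω : ω ∈ A
  · rw [Set.indicator_of_mem hω, Set.indicator_of_mem (hAB hω)]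
  · rw [Set.indicator_of_notMem hω]
    exact Set.indicator_apply_nonneg fun _ => hgnn ω

theorem IsBFSvia.USel_null {A : Set Ω} (hA : MeasurableSet A) (h : μ A = 0) :
    hT.USel u gu hgm hgae A = 0 := by
  refine hT.inj ?_
  rw [map_zero]
  refine AEEqFun.ext ?_
  have hnm : ∀ᵐ ω ∂μ, ω ∉ A := measure_eq_zero_iff_ae_notMem.1 h
  filter_upwards [hT.USel_spec hA, AEEqFun.coeFn_zero (β := ℝ) (μ := μ), hnm] with ω e1 e2 e3
  rw [e1, e2, Pi.zero_apply, Set.indicator_of_notMem e3]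

theorem IsBFSvia.USel_union {A B : Set Ω} (hA : MeasurableSet A) (hB : MeasurableSet B)
    (hd : Disjoint A B) :
    hT.USel u gu hgm hgae (A ∪ B) = hT.USel u gu hgm hgae A + hT.USel u gu hgm hgae B := by
  refine hT.inj ?_
  rw [map_add]
  refine AEEqFun.ext ?_
  filter_upwards [hT.USel_spec (hA.union hB), hT.USel_spec hA, hT.USel_spec hB,
    AEEqFun.coeFn_add (T (hT.USel u gu hgm hgae A)) (T (hT.USel u gu hgm hgae B))]
    with ω e1 e2 e3 e4
  rw [e1, e4, Pi.add_apply, e2, e3, Set.indicator_union_of_disjoint hd]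

theorem IsBFSvia.USel_biUnion {f : ℕ → Set Ω} (hf : ∀ i, MeasurableSet (f i))
    (hd : Pairwise (Function.onFun Disjoint f)) (n : ℕ) :
    hT.USel u gu hgm hgae (⋃ i ∈ Finset.range n, f i)
      = ∑ i ∈ Finset.range n, hT.USel u gu hgm hgae (f i) := by
  induction n with
  | zero =>
    have h0 : (⋃ i ∈ Finset.range 0, f i) = (∅ : Set Ω) := by simp
    rw [h0, Finset.range_zero, Finset.sum_empty, hT.USel_null MeasurableSet.empty measure_empty]
  | succ n ih =>
    have hun : (⋃ i ∈ Finset.range (n+1), f i) = (⋃ i ∈ Finset.range n, f i) ∪ f n := by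
      simp [Finset.range_add_one, Set.iUnion_union_distrib, Set.union_comm]
    have hdisj : Disjoint (⋃ i ∈ Finset.range n, f i) (f n) := by
      rw [Set.disjoint_iUnion₂_left]
      intro i hi
      exact hd (by simp at hi; omega)
    rw [hun, hT.USel_union (Finset.measurableSet_biUnion (Finset.range n)
      (fun i _ => hf i)) (hf n) hdisj, ih, Finset.sum_range_succ]


theorem IsBFSvia.USel_sigma (hgnn : ∀ ω, 0 ≤ gu ω)
    (φ : E →ₗ[ℝ] ℝ) (hφpos : ∀ x : E, 0 ≤ x → 0 ≤ φ x) (hφoc : OrderContinuousFun ⇑φ)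
    ⦃f : ℕ → Set Ω⦄ (hf : ∀ i, MeasurableSet (f i))
    (hd : Pairwise (Function.onFun Disjoint f)) :
    ENNReal.ofReal (φ (hT.USel u gu hgm hgae (⋃ i, f i)))
      = ∑' i, ENNReal.ofReal (φ (hT.USel u gu hgm hgae (f i))) := by
  set U := hT.USel u gu hgm hgae with hU
  have hFm : MeasurableSet (⋃ i, f i) := MeasurableSet.iUnion hf
  set D : ℕ → Set Ω := fun n => (⋃ i, f i) \ (⋃ i ∈ Finset.range n, f i) with hD
  have hBm : ∀ n, MeasurableSet (⋃ i ∈ Finset.range n, f i) := fun n =>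
    Finset.measurableSet_biUnion _ fun i _ => hf i
  have hDm : ∀ n, MeasurableSet (D n) := fun n => hFm.diff (hBm n)
  have hBsub : ∀ n, (⋃ i ∈ Finset.range n, f i) ⊆ ⋃ i, f i := fun n =>
    Set.iUnion₂_subset fun i _ => Set.subset_iUnion f i
  have hBmono : ∀ {n m : ℕ}, n ≤ m →
      (⋃ i ∈ Finset.range n, f i) ⊆ ⋃ i ∈ Finset.range m, f i := by
    intro n m hnm ω hω
    simp only [Set.mem_iUnion, Finset.mem_range] at hω ⊢
    obtain ⟨i, hi, hmem⟩ := hω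
    exact ⟨i, lt_of_lt_of_le hi hnm, hmem⟩
  have key1 : ∀ n, U (⋃ i, f i) = (∑ i ∈ Finset.range n, U (f i)) + U (D n) := by
    intro n
    rw [← hT.USel_biUnion hf hd n, ← hT.USel_union (hBm n) (hDm n) Set.disjoint_sdiff_right,
      Set.union_diff_cancel (hBsub n)]
  have hzanti : Antitone (fun n => U (D n)) := fun n m hnm =>
    hT.USel_mono hgnn (hDm m) (hDm n) (Set.diff_subset_diff_right (hBmono hnm))
  have hnn : ∀ n, 0 ≤ U (D n) := fun n => hT.USel_nonneg hgnn (hDm n)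
  have hglb : IsGLB (Set.range fun n => U (D n)) 0 := by
    constructor
    · rintro w ⟨n, rfl⟩; exact hnn n
    · intro w hw
      have hw' : ∀ n, w ≤ U (D n) := fun n => hw ⟨n, rfl⟩
      rw [hT.ord, map_zero, ← AEEqFun.coeFn_le]
      have hae : ∀ᵐ ω ∂μ, ∀ n, ⇑(T w) ω ≤ (D n).indicator gu ω := by
        rw [ae_all_iff]
        intro n
        filter_upwards [AEEqFun.coeFn_le.2 (hT.mono (hw' n)), hT.USel_spec (hDm n)]
          with ω e1 e2
        rw [← e2]; exact e1
      filter_upwards [hae, AEEqFun.coeFn_zero (β := ℝ) (μ := μ)] with ω e1 e2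
      rw [e2, Pi.zero_apply]
      by_cases hω : ω ∈ ⋃ i, f i
      · obtain ⟨i, hi⟩ := Set.mem_iUnion.1 hω
        have hnd : ω ∉ D (i+1) := fun hc => hc.2 (by
          simp only [Set.mem_iUnion, Finset.mem_range]
          exact ⟨i, Nat.lt_succ_self i, hi⟩)
        have := e1 (i+1)
        rwa [Set.indicator_of_notMem hnd] at this
      · have h0 : ω ∉ D 0 := fun hc => hω hc.1
        have := e1 0
        rwa [Set.indicator_of_notMem h0] at this
  have htend := hφoc.tendsto_nat hzanti hglb hnn
  have hps : ∀ n, ∑ i ∈ Finset.range n, φ (U (f i))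
      = φ (U (⋃ i, f i)) - φ (U (D n)) := by
    intro n
    rw [key1 n, map_add]
    have : ∑ i ∈ Finset.range n, φ (U (f i)) = φ (∑ i ∈ Finset.range n, U (f i)) :=
      (map_sum φ _ _).symm
    rw [this]; ring
  have htend2 : Tendsto (fun n => ∑ i ∈ Finset.range n, φ (U (f i))) atTop
      (nhds (φ (U (⋃ i, f i)))) := by
    simp only [hps]
    simpa using tendsto_const_nhds.sub htend
  have hsum : HasSum (fun i => φ (U (f i))) (φ (U (⋃ i, f i))) :=
    (hasSum_iff_tendsto_nat_of_nonneg
      (fun i => hφpos _ (hT.USel_nonneg hgnn (hf i))) _).2 htend2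
  rw [← hsum.tsum_eq,
    ENNReal.ofReal_tsum_of_nonneg (fun i => hφpos _ (hT.USel_nonneg hgnn (hf i)))
      hsum.summable]

open scoped Classical in
noncomputable def IsBFSvia.nuMeas (hT : IsBFSvia μ E T) (u : E) (gu : Ω → ℝ)
    (hgm : Measurable gu) (hgae : gu =ᵐ[μ] ⇑(T u)) (hgnn : ∀ ω, 0 ≤ gu ω)
    (φ : E →ₗ[ℝ] ℝ) (hφpos : ∀ x : E, 0 ≤ x → 0 ≤ φ x) (hφoc : OrderContinuousFun ⇑φ) :
    Measure Ω :=
  Measure.ofMeasurable (fun A _ => ENNReal.ofReal (φ (hT.USel u gu hgm hgae A)))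
    (by show ENNReal.ofReal (φ (hT.USel u gu hgm hgae ∅)) = 0
        rw [hT.USel_null MeasurableSet.empty measure_empty, map_zero, ENNReal.ofReal_zero])
    (fun f hf hd => hT.USel_sigma hgnn φ hφpos hφoc hf hd)

theorem IsBFSvia.nuMeas_apply {hgnn : ∀ ω, 0 ≤ gu ω}
    {φ : E →ₗ[ℝ] ℝ} {hφpos : ∀ x : E, 0 ≤ x → 0 ≤ φ x} {hφoc : OrderContinuousFun ⇑φ}
    {A : Set Ω} (hA : MeasurableSet A) :
    hT.nuMeas u gu hgm hgae hgnn φ hφpos hφoc A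
      = ENNReal.ofReal (φ (hT.USel u gu hgm hgae A)) := by
  classical
  exact Measure.ofMeasurable_apply A hA

theorem IsBFSvia.nuMeas_finite {hgnn : ∀ ω, 0 ≤ gu ω}
    {φ : E →ₗ[ℝ] ℝ} {hφpos : ∀ x : E, 0 ≤ x → 0 ≤ φ x} {hφoc : OrderContinuousFun ⇑φ} :
    IsFiniteMeasure (hT.nuMeas u gu hgm hgae hgnn φ hφpos hφoc) :=
  ⟨by rw [hT.nuMeas_apply MeasurableSet.univ]; exact ENNReal.ofReal_lt_top⟩

theorem IsBFSvia.nuMeas_ac {hgnn : ∀ ω, 0 ≤ gu ω}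
    {φ : E →ₗ[ℝ] ℝ} {hφpos : ∀ x : E, 0 ≤ x → 0 ≤ φ x} {hφoc : OrderContinuousFun ⇑φ} :
    hT.nuMeas u gu hgm hgae hgnn φ hφpos hφoc ≪ μ :=
  Measure.AbsolutelyContinuous.mk fun A hA h => by
    rw [hT.nuMeas_apply hA, hT.USel_null hA h, map_zero, ENNReal.ofReal_zero]

theorem lin_mono {φ : E →ₗ[ℝ] ℝ} (hφpos : ∀ x : E, 0 ≤ x → 0 ≤ φ x) {a b : E} (h : a ≤ b) :
    φ a ≤ φ b := by
  have := hφpos (b - a) (sub_nonneg.2 h)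
  rw [map_sub] at this
  linarith

/-- Forward: if `φ y = 0` for `y ≥ 0`, then the support of `y` is `nuMeas`-null. -/
theorem IsBFSvia.forward' (hu : 0 ≤ u) (hgnn : ∀ ω, 0 ≤ gu ω)
    (hweak : ∀ x : E, 0 ≤ x → x ⊓ u = 0 → x = 0)
    {φ : E →ₗ[ℝ] ℝ} (hφpos : ∀ x : E, 0 ≤ x → 0 ≤ φ x) (hφoc : OrderContinuousFun ⇑φ)
    {y : E} (hy : 0 ≤ y) (h0 : φ y = 0)
    {gy : Ω → ℝ} (hgym : Measurable gy) (hgyae : ⇑(T y) =ᵐ[μ] gy) :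
    hT.nuMeas u gu hgm hgae hgnn φ hφpos hφoc {ω | 0 < gy ω} = 0 := by
  classical
  set A : ℕ → Set Ω := fun n => {ω | gu ω ≤ ((n : ℝ)+1) * gy ω} ∩ {ω | 0 < gu ω} with hA
  have hAm : ∀ n, MeasurableSet (A n) := fun n =>
    (measurableSet_le hgm (measurable_const.mul hgym)).inter
      (measurableSet_lt measurable_const hgm)
  have hgynn : ∀ᵐ ω ∂μ, 0 ≤ gy ω := by
    filter_upwards [hT.coeFn_nonneg hy, hgyae] with ω e1 e2
    rw [← e2]; simpa using e1
  have hclaim : ∀ n : ℕ, ((n : ℝ) + 1)⁻¹ • hT.USel u gu hgm hgae (A n) ≤ y := by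
    intro n
    rw [hT.ord, _root_.map_smul, ← AEEqFun.coeFn_le]
    filter_upwards [hT.USel_spec (hAm n), hgyae, hgynn,
      AEEqFun.coeFn_smul (((n : ℝ) + 1)⁻¹) (T (hT.USel u gu hgm hgae (A n)))]
      with ω e1 e2 e3 e4
    rw [e4, Pi.smul_apply, e1, e2, smul_eq_mul]
    by_cases hω : ω ∈ A n
    · rw [Set.indicator_of_mem hω]
      have h1 : gu ω ≤ ((n : ℝ)+1) * gy ω := hω.1
      have hpos : (0:ℝ) < (n:ℝ) + 1 := by positivity
      rw [inv_mul_le_iff₀ hpos]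
      exact h1
    · rw [Set.indicator_of_notMem hω, mul_zero]; exact e3
  have hUA0 : ∀ n, φ (hT.USel u gu hgm hgae (A n)) = 0 := by
    intro n
    have hle := lin_mono hφpos (hclaim n)
    rw [_root_.map_smul, smul_eq_mul, h0] at hle
    have hge := hφpos _ (hT.USel_nonneg (u := u) (gu := gu) (hgm := hgm) (hgae := hgae) hgnn (hAm n))
    have hpos : (0:ℝ) < ((n:ℝ) + 1)⁻¹ := by positivity
    nlinarith
  have hνA : ∀ n, hT.nuMeas u gu hgm hgae hgnn φ hφpos hφoc (A n) = 0 := by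
    intro n
    rw [hT.nuMeas_apply (hAm n), hUA0 n, ENNReal.ofReal_zero]
  have hvan := hT.vanish u hu hweak gu hgm hgae y hy
  have hnullset : μ ({ω | gu ω = 0} ∩ {ω | 0 < gy ω}) = 0 := by
    have hae : ∀ᵐ ω ∂μ, gu ω = 0 → gy ω ≤ 0 := by
      filter_upwards [hvan, hgyae] with ω e1 e2 h
      rw [← e2]; exact e1 h
    refine measure_mono_null ?_ (ae_iff.1 hae)
    rintro ω ⟨h1, h2⟩
    simp only [Set.mem_setOf_eq]
    intro hc
    have h2' : 0 < gy ω := h2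
    exact absurd (hc h1) (not_le.2 h2')
  have hcover : {ω | 0 < gy ω} ⊆ (⋃ n, A n) ∪ ({ω | gu ω = 0} ∩ {ω | 0 < gy ω}) := by
    intro ω hω
    have hgy : 0 < gy ω := hω
    rcases lt_or_eq_of_le (hgnn ω) with hgu | hgu
    · obtain ⟨n, hn⟩ := exists_nat_ge (gu ω / gy ω)
      refine Set.mem_union_left _ (Set.mem_iUnion.2 ⟨n, ⟨?_, hgu⟩⟩)
      have h3 : gu ω ≤ (n:ℝ) * gy ω := (div_le_iff₀ hgy).1 hn
      have : ((n:ℝ)) * gy ω ≤ ((n:ℝ) + 1) * gy ω := by nlinarith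
      exact le_trans h3 this
    · exact Set.mem_union_right _ ⟨hgu.symm, hgy⟩
  refine le_antisymm ?_ zero_le
  calc hT.nuMeas u gu hgm hgae hgnn φ hφpos hφoc {ω | 0 < gy ω}
      ≤ hT.nuMeas u gu hgm hgae hgnn φ hφpos hφoc
        ((⋃ n, A n) ∪ ({ω | gu ω = 0} ∩ {ω | 0 < gy ω})) := measure_mono hcover
  _ ≤ hT.nuMeas u gu hgm hgae hgnn φ hφpos hφoc (⋃ n, A n)
      + hT.nuMeas u gu hgm hgae hgnn φ hφpos hφoc ({ω | gu ω = 0} ∩ {ω | 0 < gy ω}) :=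
      measure_union_le _ _
  _ = 0 := by
      rw [measure_iUnion_null hνA, hT.nuMeas_ac hnullset, add_zero]

/-- Backward: if the support of `y` is `nuMeas`-null and `y ≤ k • u` then `φ y = 0`. -/
theorem IsBFSvia.backward' (hgnn : ∀ ω, 0 ≤ gu ω)
    {φ : E →ₗ[ℝ] ℝ} (hφpos : ∀ x : E, 0 ≤ x → 0 ≤ φ x) (hφoc : OrderContinuousFun ⇑φ)
    {y : E} (hy : 0 ≤ y) {k : ℝ} (hky : y ≤ k • u)
    {gy : Ω → ℝ} (hgym : Measurable gy) (hgyae : ⇑(T y) =ᵐ[μ] gy)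
    (h0 : hT.nuMeas u gu hgm hgae hgnn φ hφpos hφoc {ω | 0 < gy ω} = 0) :
    φ y = 0 := by
  classical
  set A := {ω | 0 < gy ω} with hAdef
  have hAm : MeasurableSet A := measurableSet_lt measurable_const hgym
  have hUA0 : φ (hT.USel u gu hgm hgae A) = 0 := by
    rw [hT.nuMeas_apply hAm] at h0
    have hge := hφpos _ (hT.USel_nonneg (u := u) (gu := gu) (hgm := hgm) (hgae := hgae) hgnn hAm)
    have := ENNReal.ofReal_eq_zero.1 h0
    linarith
  have hyle : y ≤ k • hT.USel u gu hgm hgae A := by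
    rw [hT.ord, _root_.map_smul, ← AEEqFun.coeFn_le]
    filter_upwards [hT.USel_spec hAm, hgyae,
      AEEqFun.coeFn_smul k (T (hT.USel u gu hgm hgae A)),
      AEEqFun.coeFn_le.2 (hT.mono hky),
      AEEqFun.coeFn_smul k (T u), hgae] with ω e1 e2 e3 e4 e5 e6
    rw [e3, Pi.smul_apply, e1, e2, smul_eq_mul]
    by_cases hω : ω ∈ A
    · rw [Set.indicator_of_mem hω]
      calc gy ω = ⇑(T y) ω := e2.symm
      _ ≤ ⇑(T (k • u)) ω := e4
      _ = k * gu ω := by rw [_root_.map_smul, e5, Pi.smul_apply, smul_eq_mul, ← e6]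
    · rw [Set.indicator_of_notMem hω, mul_zero]
      have hng : ¬ (0 < gy ω) := hω
      linarith [not_lt.1 hng]
  have h1 := lin_mono hφpos hyle
  rw [_root_.map_smul, smul_eq_mul, hUA0, mul_zero] at h1
  exact le_antisymm h1 (hφpos y hy)

end Aux

section Exhaust
variable {Ω : Type u}


theorem exists_maximal_union {m0 : MeasurableSpace Ω} (μ : Measure Ω) [IsFiniteMeasure μ]
    {Γ : Type*} [Nonempty Γ] (C : Γ → Set Ω) (hC : ∀ γ, MeasurableSet (C γ)) :
    ∃ t : ℕ → Γ, ∀ γ, μ (C γ \ ⋃ n, C (t n)) = 0 := by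
  classical
  set M : (ℕ → Γ) → ENNReal := fun s => μ (⋃ n, C (s n)) with hM
  set α := ⨆ s : ℕ → Γ, M s with hα
  have hαfin : α ≠ ⊤ :=
    ne_of_lt (lt_of_le_of_lt (iSup_le fun s => measure_mono (Set.subset_univ _))
      (measure_lt_top μ Set.univ))
  have hchoice : ∀ k : ℕ, ∃ s : ℕ → Γ, α ≤ M s + ((k : ENNReal) + 1)⁻¹ := by
    intro k
    by_cases h0 : α ≤ ((k : ENNReal) + 1)⁻¹
    · exact ⟨fun _ => Classical.arbitrary Γ, h0.trans le_add_self⟩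
    · push_neg at h0
      have hα0 : α ≠ 0 := by
        intro h; rw [h] at h0; exact (not_lt_of_ge zero_le) h0
      have hε0 : ((k : ENNReal) + 1)⁻¹ ≠ 0 := by
        simp [ENNReal.inv_ne_zero]
      have hlt : α - ((k : ENNReal) + 1)⁻¹ < α := ENNReal.sub_lt_self hαfin hα0 hε0
      rw [hα, lt_iSup_iff] at hlt
      obtain ⟨s, hsl⟩ := hlt
      exact ⟨s, tsub_le_iff_right.1 hsl.le⟩
  choose s hs using hchoice
  set t : ℕ → Γ := fun m => s (Nat.unpair m).1 (Nat.unpair m).2 with ht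
  refine ⟨t, ?_⟩
  set S := ⋃ n, C (t n) with hS
  have hSm : MeasurableSet S := MeasurableSet.iUnion fun n => hC _
  have hSle : μ S ≤ α := le_iSup M t
  have hSge : α ≤ μ S := by
    refine ENNReal.le_of_forall_pos_le_add fun ε hε _ => ?_
    obtain ⟨k, hk⟩ := ENNReal.exists_inv_nat_lt (by exact_mod_cast hε.ne' : (ε : ENNReal) ≠ 0)
    have hsub : (⋃ n, C (s k n)) ⊆ S := by
      intro ω hω
      obtain ⟨n, hn⟩ := Set.mem_iUnion.1 hω
      refine Set.mem_iUnion.2 ⟨Nat.pair k n, ?_⟩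
      rw [ht]
      simp only [Nat.unpair_pair]
      exact hn
    have h1 : α ≤ μ S + ((k : ENNReal) + 1)⁻¹ :=
      (hs k).trans (add_le_add_left (measure_mono hsub) _)
    have h2 : ((k : ENNReal) + 1)⁻¹ ≤ (ε : ENNReal) := by
      refine le_trans (ENNReal.inv_le_inv.2 ?_) hk.le
      exact le_add_right le_rfl
    exact h1.trans (add_le_add_right h2 _)
  have hSα : μ S = α := le_antisymm hSle hSge
  intro γ
  set t' : ℕ → Γ := fun m => Nat.casesOn m γ t with ht'
  have hUn : (⋃ m, C (t' m)) = C γ ∪ S := by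
    apply Set.eq_of_subset_of_subset
    · refine Set.iUnion_subset fun m => ?_
      cases m with
      | zero => exact Set.subset_union_left
      | succ m => exact (Set.subset_iUnion (fun n => C (t n)) m).trans Set.subset_union_right
    · refine Set.union_subset ?_ ?_
      · exact Set.subset_iUnion_of_subset 0 le_rfl
      · exact Set.iUnion_subset fun n => Set.subset_iUnion_of_subset (n + 1) le_rfl
  have hle : μ (C γ ∪ S) ≤ α := by
    rw [← hUn]
    exact le_iSup M t'
  have heq : μ (C γ ∪ S) = μ S + μ (C γ \ S) := by
    rw [Set.union_comm, ← Set.union_diff_self (s := S) (t := C γ),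
      measure_union Set.disjoint_sdiff_right ((hC γ).diff hSm)]
  have hfin : μ S + μ (C γ \ S) ≤ μ S + 0 := by
    rw [add_zero]
    calc μ S + μ (C γ \ S) = μ (C γ ∪ S) := heq.symm
    _ ≤ α := hle
    _ = μ S := hSα.symm
  have := (ENNReal.add_le_add_iff_left (measure_ne_top μ S)).1 hfin
  exact le_antisymm this zero_le



theorem rn_null_inter {m0 : MeasurableSpace Ω} {μ ν : Measure Ω} [IsFiniteMeasure μ]
    [IsFiniteMeasure ν] (hac : ν ≪ μ) {A : Set Ω} (hA : MeasurableSet A) (h : ν A = 0) :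
    μ (A ∩ {ω | 0 < ν.rnDeriv μ ω}) = 0 := by
  have hw : μ.withDensity (ν.rnDeriv μ) = ν := Measure.withDensity_rnDeriv_eq ν μ hac
  have hint : ∫⁻ ω in A, ν.rnDeriv μ ω ∂μ = 0 := by
    rw [← withDensity_apply _ hA, hw]; exact h
  have hae := (setLIntegral_eq_zero_iff hA (Measure.measurable_rnDeriv ν μ)).1 hint
  refine measure_mono_null ?_ (ae_iff.1 hae)
  rintro ω ⟨hωA, hωC⟩
  simp only [Set.mem_setOf_eq]
  intro hc
  have h2 : 0 < ν.rnDeriv μ ω := hωC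
  exact h2.ne' (hc hωA)

theorem rn_compl_null {m0 : MeasurableSpace Ω} {μ ν : Measure Ω} [IsFiniteMeasure μ]
    [IsFiniteMeasure ν] (hac : ν ≪ μ) :
    ν {ω | 0 < ν.rnDeriv μ ω}ᶜ = 0 := by
  have hw : μ.withDensity (ν.rnDeriv μ) = ν := Measure.withDensity_rnDeriv_eq ν μ hac
  have hCm : MeasurableSet {ω | 0 < ν.rnDeriv μ ω} :=
    measurableSet_lt measurable_const (Measure.measurable_rnDeriv ν μ)
  have key : (μ.withDensity (ν.rnDeriv μ)) {ω | 0 < ν.rnDeriv μ ω}ᶜ = 0 := by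
    rw [withDensity_apply _ hCm.compl,
      setLIntegral_eq_zero_iff hCm.compl (Measure.measurable_rnDeriv ν μ)]
    refine Eventually.of_forall fun ω hω => ?_
    simpa using hω
  rwa [hw] at key

end Exhaust

/-- In a Banach function space `E` (with a weak unit `u > 0`), any family of
positive order continuous functionals `{x*_γ}` admits a countable subfamily `{x*_{γₙ}}`
such that for `x ≥ 0`: if all `x*_{γₙ}(x) = 0` then `x*_γ(x) = 0` for every `γ`. -/
theorem exists_countable_subfamily_null_determining
    {m0 : MeasurableSpace Ω} {μ : Measure Ω} [IsProbabilityMeasure μ]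
    (E : Type v) [NormedAddCommGroup E] [Lattice E] [HasSolidNorm E] [IsOrderedAddMonoid E] [NormedSpace ℝ E] [CompleteSpace E]
    (T : E →ₗ[ℝ] (Ω →ₘ[μ] ℝ)) (hT : IsBFSvia μ E T)
    (u : E) (hu : 0 < u) (hweak : ∀ x : E, 0 ≤ x → x ⊓ u = 0 → x = 0)
    {Γ : Type v} [Nonempty Γ] (xstar : Γ → (E →ₗ[ℝ] ℝ))
    (hpos : ∀ γ, ∀ x : E, 0 ≤ x → 0 ≤ xstar γ x)
    (hoc : ∀ γ, OrderContinuousFun ⇑(xstar γ)) :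
    ∃ γn : ℕ → Γ, ∀ x : E, 0 ≤ x →
      (∀ n, xstar (γn n) x = 0) → ∀ γ, xstar γ x = 0 := by
  classical
  obtain ⟨gu0, hgu0m, hgu0ae⟩ : ∃ g : Ω → ℝ, Measurable g ∧ ⇑(T u) =ᵐ[μ] g :=
    ⟨_, (T u).aestronglyMeasurable.aemeasurable.measurable_mk,
      (T u).aestronglyMeasurable.aemeasurable.ae_eq_mk⟩
  have hgm : Measurable (fun ω => max (gu0 ω) 0) := hgu0m.max measurable_const
  set gu : Ω → ℝ := fun ω => max (gu0 ω) 0 with hgudef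
  have hgnn : ∀ ω, 0 ≤ gu ω := fun ω => le_max_right _ _
  have hgae : gu =ᵐ[μ] ⇑(T u) := by
    filter_upwards [hgu0ae, hT.coeFn_nonneg hu.le] with ω e1 e2
    have e2' : (0:ℝ) ≤ ⇑(T u) ω := by simpa using e2
    show max (gu0 ω) 0 = ⇑(T u) ω
    rw [← e1, max_eq_left e2']
  haveI : ∀ δ : Γ, IsFiniteMeasure (hT.nuMeas u gu hgm hgae hgnn (xstar δ) (hpos δ) (hoc δ)) :=
    fun δ => hT.nuMeas_finite
  obtain ⟨t, hmax⟩ := exists_maximal_union μ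
    (fun γ => {ω | 0 < (hT.nuMeas u gu hgm hgae hgnn (xstar γ) (hpos γ) (hoc γ)).rnDeriv μ ω})
    (fun γ => measurableSet_lt measurable_const (Measure.measurable_rnDeriv _ _))
  refine ⟨t, ?_⟩
  intro x hx hzero γ
  -- multiples of the unit
  have hku : ∀ k : ℕ, 0 ≤ (k : ℝ) • u := by
    intro k
    rw [hT.ord, map_zero, _root_.map_smul, ← AEEqFun.coeFn_le]
    filter_upwards [AEEqFun.coeFn_zero (β := ℝ) (μ := μ),
      AEEqFun.coeFn_smul (k:ℝ) (T u), hgae] with ω e1 e2 e3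
    rw [e1, e2, Pi.zero_apply, Pi.smul_apply, smul_eq_mul, ← e3]
    positivity
  have hkmono : ∀ {k m : ℕ}, k ≤ m → (k:ℝ) • u ≤ (m:ℝ) • u := by
    intro k m hkm
    rw [hT.ord, _root_.map_smul, _root_.map_smul, ← AEEqFun.coeFn_le]
    filter_upwards [AEEqFun.coeFn_smul (k:ℝ) (T u), AEEqFun.coeFn_smul (m:ℝ) (T u), hgae]
      with ω e1 e2 e3
    rw [e1, e2, Pi.smul_apply, Pi.smul_apply, smul_eq_mul, smul_eq_mul, ← e3]
    have : ((k:ℝ)) ≤ (m:ℝ) := by exact_mod_cast hkm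
    nlinarith [hgnn ω]
  set y : ℕ → E := fun k => x ⊓ ((k:ℝ) • u) with hydef
  have hy0 : ∀ k, 0 ≤ y k := fun k => le_inf hx (hku k)
  have hyx : ∀ k, y k ≤ x := fun k => inf_le_left
  have hymono : Monotone y := fun k m hkm =>
    le_inf inf_le_left (inf_le_right.trans (hkmono hkm))
  obtain ⟨gy, hgym, hgyae⟩ : ∃ gy : ℕ → Ω → ℝ, (∀ k, Measurable (gy k)) ∧
      ∀ k, ⇑(T (y k)) =ᵐ[μ] gy k := by
    have h := fun k : ℕ => (T (y k)).aestronglyMeasurable.aemeasurable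
    exact ⟨fun k => (h k).mk _, fun k => (h k).measurable_mk, fun k => (h k).ae_eq_mk⟩
  -- Step A : each truncation is annihilated by xstar γ
  have hyzero : ∀ k, xstar γ (y k) = 0 := by
    intro k
    have hfz : ∀ n, hT.nuMeas u gu hgm hgae hgnn (xstar (t n)) (hpos (t n)) (hoc (t n))
        {ω | 0 < gy k ω} = 0 := by
      intro n
      have hz : xstar (t n) (y k) = 0 := by
        have h1 := hpos (t n) (y k) (hy0 k)
        have h2 := lin_mono (hpos (t n)) (hyx k)
        rw [hzero n] at h2
        linarith
      exact hT.forward' hu.le hgnn hweak (hpos (t n)) (hoc (t n)) (hy0 k) hz (hgym k)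
        (hgyae k)
    have hAkm : MeasurableSet {ω | 0 < gy k ω} :=
      measurableSet_lt measurable_const (hgym k)
    have hmun : ∀ n, μ ({ω | 0 < gy k ω} ∩
        {ω | 0 < (hT.nuMeas u gu hgm hgae hgnn (xstar (t n)) (hpos (t n))
          (hoc (t n))).rnDeriv μ ω}) = 0 := fun n =>
      rn_null_inter (hT.nuMeas_ac) hAkm (hfz n)
    have hAS : μ ({ω | 0 < gy k ω} ∩ ⋃ n,
        {ω | 0 < (hT.nuMeas u gu hgm hgae hgnn (xstar (t n)) (hpos (t n))
          (hoc (t n))).rnDeriv μ ω}) = 0 := by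
      rw [Set.inter_iUnion]
      exact measure_iUnion_null hmun
    have hACγ : μ ({ω | 0 < gy k ω} ∩
        {ω | 0 < (hT.nuMeas u gu hgm hgae hgnn (xstar γ) (hpos γ) (hoc γ)).rnDeriv μ ω})
        = 0 := by
      refine measure_mono_null ?_ (measure_union_null hAS (hmax γ))
      rintro ω ⟨h1, h2⟩
      by_cases hS : ω ∈ ⋃ n,
        {ω | 0 < (hT.nuMeas u gu hgm hgae hgnn (xstar (t n)) (hpos (t n))
          (hoc (t n))).rnDeriv μ ω}
      · exact Or.inl ⟨h1, hS⟩
      · exact Or.inr ⟨h2, hS⟩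
    have hνγ : hT.nuMeas u gu hgm hgae hgnn (xstar γ) (hpos γ) (hoc γ)
        {ω | 0 < gy k ω} = 0 := by
      have hsub : {ω | 0 < gy k ω} ⊆ ({ω | 0 < gy k ω} ∩
          {ω | 0 < (hT.nuMeas u gu hgm hgae hgnn (xstar γ) (hpos γ) (hoc γ)).rnDeriv μ ω})
          ∪ ({ω | 0 < (hT.nuMeas u gu hgm hgae hgnn (xstar γ) (hpos γ) (hoc γ)).rnDeriv μ ω})ᶜ := by
        intro ω hω
        by_cases hc : ω ∈ {ω | 0 < (hT.nuMeas u gu hgm hgae hgnn (xstar γ) (hpos γ)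
          (hoc γ)).rnDeriv μ ω}
        · exact Or.inl ⟨hω, hc⟩
        · exact Or.inr hc
      refine measure_mono_null hsub (measure_union_null ((hT.nuMeas_ac) hACγ) ?_)
      exact rn_compl_null (hT.nuMeas_ac)
    exact hT.backward' hgnn (hpos γ) (hoc γ) (hy0 k)
      (inf_le_right : y k ≤ (k:ℝ) • u) (hgym k) (hgyae k) hνγ
  -- Step B : order continuity
  have hzanti : Antitone (fun k => x - y k) := fun k m hkm =>
    sub_le_sub_left (hymono hkm) x
  have hznn : ∀ k, 0 ≤ x - y k := fun k => sub_nonneg.2 (hyx k)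
  have hvanx := hT.vanish u hu.le hweak gu hgm hgae x hx
  have hglb : IsGLB (Set.range fun k => x - y k) 0 := by
    constructor
    · rintro w ⟨k, rfl⟩; exact hznn k
    · intro w hw
      have hw' : ∀ k : ℕ, w ≤ x - y k := fun k => hw ⟨k, rfl⟩
      rw [hT.ord, map_zero, ← AEEqFun.coeFn_le]
      have hae : ∀ᵐ ω ∂μ, ∀ k : ℕ,
          ⇑(T w) ω ≤ ⇑(T x) ω - min (⇑(T x) ω) ((k:ℝ) * gu ω) := by
        rw [ae_all_iff]
        intro k
        have hTy : T (y k) = T x ⊓ ((k:ℝ) • T u) := by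
          show T (x ⊓ ((k:ℝ) • u)) = _
          rw [hT.map_inf, _root_.map_smul]
        filter_upwards [AEEqFun.coeFn_le.2 (hT.mono (hw' k)),
          AEEqFun.coeFn_sub (T x) (T (y k)),
          AEEqFun.coeFn_inf (T x) ((k:ℝ) • T u),
          AEEqFun.coeFn_smul (k:ℝ) (T u), hgae] with ω e1 e2 e3 e4 e5
        have h1 : ⇑(T w) ω ≤ ⇑(T x - T (y k)) ω := by
          rwa [map_sub] at e1
        rw [e2, Pi.sub_apply] at h1
        have h2 : ⇑(T (y k)) ω = min (⇑(T x) ω) ((k:ℝ) * gu ω) := by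
          rw [hTy, e3, e4, Pi.smul_apply, smul_eq_mul, ← e5]
        rwa [h2] at h1
      filter_upwards [hae, AEEqFun.coeFn_zero (β := ℝ) (μ := μ), hT.coeFn_nonneg hx,
        hvanx] with ω e1 e2 e3 e4
      rw [e2, Pi.zero_apply]
      have e3' : (0:ℝ) ≤ ⇑(T x) ω := by simpa using e3
      rcases lt_or_eq_of_le (hgnn ω) with hgu | hgu
      · obtain ⟨k, hk⟩ := exists_nat_ge (⇑(T x) ω / gu ω)
        have hkx : ⇑(T x) ω ≤ (k:ℝ) * gu ω := by
          rw [div_le_iff₀ hgu] at hk; exact hk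
        have hk2 := e1 k
        rw [min_eq_left hkx] at hk2
        linarith
      · have h0 : ⇑(T x) ω = 0 := le_antisymm (e4 hgu.symm) e3'
        have hk2 := e1 0
        rw [h0] at hk2
        simpa using hk2
  have htend := (hoc γ).tendsto_nat hzanti hglb hznn
  have hconst : (fun k : ℕ => xstar γ (x - y k)) = fun _ => xstar γ x := by
    funext k
    rw [map_sub, hyzero k, sub_zero]
  rw [hconst] at htend
  exact tendsto_nhds_unique tendsto_const_nhds htend
end

section
/- Let X be a Banach function space in L⁰(Ω, Σ, ℙ). Then the Kreps–Yan theorem holds for (X, σ(X, X_n^∼)): for every σ(X, X_n^∼)-closed cone C ⊆ X with −X₊ ⊆ C and C ∩ X₊ = {0}, there exists a strictly positive φ ∈ X_n^∼ with φ ≤ 0 on C. -/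
open MeasureTheory Filter
open Topology

universe u v

variable {Ω : Type u}

/-- The weak topology `σ(E, Eₙ~)` induced by the order continuous dual. -/
noncomputable def weakOCTop (E : Type v) [Lattice E] [AddCommGroup E] [Module ℝ E] :
    TopologicalSpace E :=
  ⨅ φ ∈ {φ : E →ₗ[ℝ] ℝ | OrderContinuousFun ⇑φ},
    TopologicalSpace.induced ⇑φ inferInstance

namespace KYaux

variable (E : Type v) [NormedAddCommGroup E] [Lattice E] [HasSolidNorm E] [IsOrderedAddMonoid E] [NormedSpace ℝ E] [CompleteSpace E]

/-- The submodule of order continuous functionals. -/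
noncomputable def ocSet : Submodule ℝ (E →ₗ[ℝ] ℝ) where
  carrier := {φ : E →ₗ[ℝ] ℝ | OrderContinuousFun ⇑φ}
  add_mem' := by
    intro f g hf hg ι iP iD iN y hy
    letI := iP
    have := (hf ι iP iD iN y hy).add (hg ι iP iD iN y hy)
    simpa using this
  zero_mem' := by
    intro ι iP iD iN y hy
    letI := iP
    simpa using (tendsto_const_nhds : Tendsto (fun _ : ι => (0:ℝ)) atTop (nhds 0))
  smul_mem' := by
    intro c f hf ι iP iD iN y hy
    letI := iP
    have := (hf ι iP iD iN y hy).const_mul c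
    simpa using this

lemma mem_ocSet {f : E →ₗ[ℝ] ℝ} : f ∈ ocSet E ↔ OrderContinuousFun ⇑f := Iff.rfl

lemma exists_forall_of_eventually_atTop {ι : Type*} [Preorder ι] [IsDirected ι (· ≤ ·)]
    [Nonempty ι] {p : ι → Prop} (h : ∀ᶠ a in atTop, p a) : ∃ a₀, ∀ a, a₀ ≤ a → p a := by
  have h' : {x | p x} ∈ (⨅ a : ι, Filter.principal (Set.Ici a)) := h
  rw [Filter.mem_iInf_of_directed] at h'
  · obtain ⟨a₀, ha₀⟩ := h'
    rw [Filter.mem_principal] at ha₀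
    exact ⟨a₀, fun a ha => ha₀ ha⟩
  · intro a b
    obtain ⟨c, hc1, hc2⟩ := directed_of (· ≤ ·) a b
    exact ⟨c, Filter.principal_mono.2 (Set.Ici_subset_Ici.2 hc1),
      Filter.principal_mono.2 (Set.Ici_subset_Ici.2 hc2)⟩

/-- The canonical pairing between `E` and the order continuous dual. -/
noncomputable def ocPair : E →ₗ[ℝ] ((ocSet E) →ₗ[ℝ] ℝ) where
  toFun x :=
    { toFun := fun f => (f : E →ₗ[ℝ] ℝ) x
      map_add' := fun f g => rfl
      map_smul' := fun c f => rfl }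
  map_add' x y := LinearMap.ext fun f => (f : E →ₗ[ℝ] ℝ).map_add x y
  map_smul' c x := LinearMap.ext fun f => (f : E →ₗ[ℝ] ℝ).map_smul c x

lemma weakOCTop_eq :
    weakOCTop E = WeakBilin.instTopologicalSpace (ocPair E) := by
  rw [weakOCTop]
  rw [iInf_subtype']
  show _ = TopologicalSpace.induced (fun x y => ocPair E x y) Pi.topologicalSpace
  rw [Pi.topologicalSpace, induced_iInf]
  refine iInf_congr fun f => ?_
  rw [induced_compose]
  rfl

lemma oc_of_weakBilin_continuous (f : E →ₗ[ℝ] ℝ)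
    (hf : Continuous fun x : WeakBilin (ocPair E) => f x) : OrderContinuousFun ⇑f := by
  have h0 : f (0 : E) = 0 := map_zero f
  have h1 : f ⁻¹' Metric.ball 0 1 ∈ 𝓝 (0 : WeakBilin (ocPair E)) := by
    have := hf.continuousAt (x := (0 : WeakBilin (ocPair E)))
    exact this.preimage_mem_nhds (by
      have h0' : f (0 : WeakBilin (ocPair E)) = 0 := h0
      rw [h0']; exact Metric.ball_mem_nhds _ one_pos)
  obtain ⟨U, hU, hsub⟩ := (LinearMap.hasBasis_weakBilin (E := E) (F := ocSet E) (ocPair E)).mem_iff.mp h1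
  obtain ⟨I, r, hr, rfl⟩ := (SeminormFamily.basisSets_iff _).mp hU
  have hker : ⨅ i : I, LinearMap.ker ((i : ocSet E) : E →ₗ[ℝ] ℝ) ≤ LinearMap.ker f := by
    intro x hx
    simp only [Submodule.mem_iInf, LinearMap.mem_ker] at hx ⊢
    by_contra hfx
    have hc : ∀ c : ℝ, |c| * |f x| < 1 := by
      intro c
      have hmem : c • x ∈ Seminorm.ball (I.sup ((ocPair E).toSeminormFamily)) 0 r := by
        rw [Seminorm.mem_ball_zero]
        refine Seminorm.finset_sup_apply_lt hr fun i hi => ?_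
        have : ((ocPair E).toSeminormFamily i) (c • x) = ‖(i : E →ₗ[ℝ] ℝ) (c • x)‖ := rfl
        rw [this, LinearMap.map_smul]
        have := hx ⟨i, hi⟩
        simp [this]
        exact hr
      have := hsub hmem
      replace this : |f (c • x)| < 1 := by
        have h' : f (c • x) ∈ Metric.ball (0 : ℝ) 1 := this
        simpa only [Metric.mem_ball, dist_zero_right, Real.norm_eq_abs] using h'
      rw [LinearMap.map_smul, smul_eq_mul, abs_mul] at this
      exact this
    have := hc (2 / |f x|)
    rw [abs_div] at this
    have h2 : |(2:ℝ)| / |(|f x|)| * |f x| = 2 := by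
      rw [abs_abs, abs_two, div_mul_cancel₀]
      exact abs_ne_zero.mpr hfx
    rw [h2] at this; linarith
  have hspan : f ∈ Submodule.span ℝ (Set.range fun i : I => ((i : ocSet E) : E →ₗ[ℝ] ℝ)) :=
    mem_span_of_iInf_ker_le_ker hker
  have hle : Submodule.span ℝ (Set.range fun i : I => ((i : ocSet E) : E →ₗ[ℝ] ℝ)) ≤ ocSet E := by
    rw [Submodule.span_le]
    rintro _ ⟨i, rfl⟩
    exact (i : ocSet E).2
  exact hle hspan


lemma pos_bound (hsm : ∀ (c : ℝ) (x : E), 0 ≤ c → 0 ≤ x → 0 ≤ c • x)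
    (f : E →ₗ[ℝ] ℝ) (hf : ∀ x : E, 0 ≤ x → 0 ≤ f x) :
    ∃ M : ℝ, 0 ≤ M ∧ ∀ x : E, |f x| ≤ M * ‖x‖ := by
  have hmono : ∀ a b : E, a ≤ b → f a ≤ f b := by
    intro a b hab
    have : 0 ≤ f (b - a) := hf _ (by simpa using hab)
    rw [map_sub] at this; linarith
  have habs : ∀ x : E, |f x| ≤ f |x| := by
    intro x
    rcases abs_cases (f x) with ⟨h, _⟩ | ⟨h, _⟩ <;> rw [h]
    · exact hmono _ _ (le_abs_self x)
    · rw [← map_neg]; exact hmono _ _ (neg_le_abs x)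
  by_contra hcon
  push_neg at hcon
  have key : ∀ n : ℕ, ∃ y : E, 0 ≤ y ∧ ‖y‖ ≤ (2:ℝ)⁻¹ ^ n ∧ (2:ℝ) ^ n ≤ f y := by
    intro n
    obtain ⟨x, hx⟩ := hcon ((4:ℝ) ^ n) (by positivity)
    have hx' : (4:ℝ) ^ n * ‖x‖ < f |x| := lt_of_lt_of_le hx (habs x)
    have hxne : x ≠ 0 := by
      rintro rfl
      simp at hx'
    have hnx : (0:ℝ) < ‖x‖ := norm_pos_iff.mpr hxne
    refine ⟨((2:ℝ) ^ n * ‖x‖)⁻¹ • |x|, ?_, ?_, ?_⟩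
    · exact hsm _ _ (by positivity) (abs_nonneg x)
    · rw [norm_smul, norm_abs_eq_norm]
      rw [Real.norm_eq_abs, abs_inv, abs_of_pos (by positivity)]
      rw [mul_inv, mul_assoc, inv_mul_cancel₀ (ne_of_gt hnx), mul_one, inv_pow]
    · rw [LinearMap.map_smul, smul_eq_mul, inv_mul_eq_div, le_div_iff₀ (by positivity)]
      have h4 : (4:ℝ) ^ n = 2 ^ n * 2 ^ n := by rw [← mul_pow]; norm_num
      nlinarith [hx']
  choose y hy0 hyn hyf using key
  have hs : Summable y := by
    refine Summable.of_norm_bounded ?_ hyn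
    exact summable_geometric_of_lt_one (by norm_num) (by norm_num)
  set Y := ∑' n, y n with hY
  have hYn : ∀ n, y n ≤ Y := fun n => Summable.le_tsum hs n fun m _ => hy0 m
  have hbig : ∀ n : ℕ, (2:ℝ) ^ n ≤ f Y := fun n => le_trans (hyf n) (hmono _ _ (hYn n))
  obtain ⟨n, hn⟩ := pow_unbounded_of_one_lt (f Y) (by norm_num : (1:ℝ) < 2)
  exact absurd (hbig n) (not_le.mpr hn)

variable {E}

lemma sep {C : Set E}
    (hclosed : @IsClosed E (weakOCTop E) C)
    (hsmul : ∀ x ∈ C, ∀ r : ℝ, 0 ≤ r → r • x ∈ C)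
    (hadd : ∀ x ∈ C, ∀ y ∈ C, x + y ∈ C)
    (hzero : (0:E) ∈ C)
    (x : E) (hx : x ∉ C) :
    ∃ f : E →ₗ[ℝ] ℝ, OrderContinuousFun ⇑f ∧ (∀ z ∈ C, f z ≤ 0) ∧ 0 < f x := by
  have hconv : Convex ℝ C := by
    intro a ha b hb s t hs ht hst
    exact hadd _ (hsmul a ha s hs) _ (hsmul b hb t ht)
  have hclosed' : @IsClosed (WeakBilin (ocPair E)) (WeakBilin.instTopologicalSpace (ocPair E)) C := by
    rw [show WeakBilin.instTopologicalSpace (ocPair E) = weakOCTop E from (weakOCTop_eq E).symm]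
    exact hclosed
  haveI : IsTopologicalAddGroup (WeakBilin (ocPair E)) := by
    exact WeakBilin.instIsTopologicalAddGroup (E := E) (F := ocSet E) (ocPair E)
  haveI : LocallyConvexSpace ℝ (WeakBilin (ocPair E)) := by
    exact WeakBilin.locallyConvexSpace (E := E) (F := ocSet E) (B := ocPair E)
  haveI : ContinuousSMul ℝ (WeakBilin (ocPair E)) := by
    exact WeakBilin.instContinuousSMul (E := E) (F := ocSet E) (ocPair E)
  obtain ⟨g, u, hgC, hgx⟩ :=
    geometric_hahn_banach_closed_point (E := WeakBilin (ocPair E)) hconv hclosed' hx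
  have hu : (0:ℝ) < u := by
    have := hgC 0 hzero
    rwa [map_zero] at this
  refine ⟨(g : WeakBilin (ocPair E) →ₗ[ℝ] ℝ), ?_, ?_, ?_⟩
  · exact oc_of_weakBilin_continuous E _ g.continuous
  · intro z hz
    by_contra h
    push_neg at h
    set t : ℝ := (u + 1) / g z with ht
    have htpos : 0 < t := div_pos (by linarith) h
    have := hgC (t • z) (hsmul z hz t htpos.le)
    replace this : t * g z < u := lt_of_eq_of_lt (g.map_smul t z).symm this
    rw [ht] at this
    have hne : (g z : ℝ) ≠ 0 := ne_of_gt h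
    rw [div_mul_cancel₀ _ hne] at this
    linarith
  · exact lt_trans hu hgx


section BFS

variable {m0 : MeasurableSpace Ω} {μ : Measure Ω} [IsProbabilityMeasure μ]
variable {T : E →ₗ[ℝ] (Ω →ₘ[μ] ℝ)}

/-- A measurable, everywhere-nonnegative representative of `T u`. -/
noncomputable def urep (T : E →ₗ[ℝ] (Ω →ₘ[μ] ℝ)) (u : E) : Ω → ℝ :=
  fun ω => max ((T u : Ω →ₘ[μ] ℝ) ω) 0

lemma urep_meas (u : E) : Measurable (urep T u) :=
  ((T u).measurable).max measurable_const

lemma urep_nonneg (u : E) (ω : Ω) : 0 ≤ urep T u ω := le_max_right _ _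

variable (hT : IsBFSvia μ E T)
include hT

lemma T_inj : Function.Injective T := by
  intro a b hab
  exact le_antisymm ((hT.ord a b).mpr hab.le) ((hT.ord b a).mpr hab.ge)

lemma T_nonneg {x : E} : 0 ≤ x ↔ 0 ≤ T x := by
  have := hT.ord 0 x
  rwa [map_zero] at this

lemma le_iff_ae {x y : E} : x ≤ y ↔ (T x : Ω → ℝ) ≤ᵐ[μ] (T y : Ω → ℝ) := by
  rw [hT.ord x y, ← AEEqFun.coeFn_le]

omit hT in
lemma nonneg_iff {f : Ω →ₘ[μ] ℝ} : 0 ≤ f ↔ ∀ᵐ ω ∂μ, 0 ≤ f ω := by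
  rw [← AEEqFun.coeFn_le]
  have h0 : ((0 : Ω →ₘ[μ] ℝ) : Ω → ℝ) =ᵐ[μ] fun _ => 0 := AEEqFun.coeFn_zero
  constructor
  · intro h; filter_upwards [h, h0] with ω h1 h2; rw [h2] at h1; exact h1
  · intro h; filter_upwards [h, h0] with ω h1 h2; rw [h2]; exact h1

lemma smul_nn (c : ℝ) (x : E) (hc : 0 ≤ c) (hx : 0 ≤ x) : 0 ≤ c • x := by
  rw [T_nonneg hT] at hx ⊢
  rw [T.map_smul]
  rw [nonneg_iff] at hx ⊢
  filter_upwards [hx, AEEqFun.coeFn_smul c (T x)] with ω h1 h2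
  rw [h2]
  simp only [Pi.smul_apply, smul_eq_mul]
  exact mul_nonneg hc h1

lemma urep_ae {u : E} (hu : 0 ≤ u) : urep T u =ᵐ[μ] (T u : Ω → ℝ) := by
  filter_upwards [nonneg_iff.mp ((T_nonneg hT).mp hu)] with ω h1
  simp only [urep]
  exact max_eq_left h1

/-- `T u` cut to a measurable set, as an element of `L⁰`. -/
noncomputable def cutL (T : E →ₗ[ℝ] (Ω →ₘ[μ] ℝ)) (u : E) (A : Set Ω) (hA : MeasurableSet A) :
    Ω →ₘ[μ] ℝ :=
  AEEqFun.mk (A.indicator (urep T u)) ((urep_meas u).indicator hA).aestronglyMeasurable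

omit hT in
lemma cutL_coe (u : E) (A : Set Ω) (hA : MeasurableSet A) :
    (cutL T u A hA : Ω → ℝ) =ᵐ[μ] A.indicator (urep T u) := AEEqFun.coeFn_mk _ _

lemma cutL_le_abs {u : E} (hu : 0 ≤ u) (A : Set Ω) (hA : MeasurableSet A) :
    |cutL T u A hA| ≤ |T u| := by
  rw [← AEEqFun.coeFn_le]
  filter_upwards [AEEqFun.coeFn_abs (cutL T u A hA), AEEqFun.coeFn_abs (T u),
    cutL_coe (T := T) u A hA, urep_ae hT hu] with ω h1 h2 h3 h4
  rw [h1, h2, h3, ← h4]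
  rw [abs_of_nonneg (Set.indicator_nonneg (fun x _ => urep_nonneg u x) ω),
    abs_of_nonneg (urep_nonneg u ω)]
  exact Set.indicator_le_self' (fun x _ => urep_nonneg u x) ω

/-- The element of `E` representing `T u` cut to a measurable set. -/
noncomputable def cutE (hT : IsBFSvia μ E T) {u : E} (hu : 0 ≤ u) (A : Set Ω)
    (hA : MeasurableSet A) : E :=
  (hT.solid (cutL T u A hA) u (cutL_le_abs hT hu A hA)).choose

lemma T_cutE {u : E} (hu : 0 ≤ u) (A : Set Ω) (hA : MeasurableSet A) :
    T (cutE hT hu A hA) = cutL T u A hA :=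
  (hT.solid (cutL T u A hA) u (cutL_le_abs hT hu A hA)).choose_spec

lemma cutE_nonneg {u : E} (hu : 0 ≤ u) (A : Set Ω) (hA : MeasurableSet A) :
    0 ≤ cutE hT hu A hA := by
  rw [T_nonneg hT, T_cutE hT hu A hA, nonneg_iff]
  filter_upwards [cutL_coe (T := T) u A hA] with ω h1
  rw [h1]
  exact Set.indicator_nonneg (fun x _ => urep_nonneg u x) ω

lemma cutE_le {u : E} (hu : 0 ≤ u) (A : Set Ω) (hA : MeasurableSet A) :
    cutE hT hu A hA ≤ u := by
  rw [le_iff_ae hT, T_cutE hT hu A hA]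
  filter_upwards [cutL_coe (T := T) u A hA, urep_ae hT hu] with ω h1 h2
  rw [h1, ← h2]
  exact Set.indicator_le_self' (fun x _ => urep_nonneg u x) ω

lemma cutE_univ {u : E} (hu : 0 ≤ u) : cutE hT hu Set.univ MeasurableSet.univ = u := by
  apply T_inj hT
  rw [T_cutE hT hu]
  apply AEEqFun.ext
  filter_upwards [cutL_coe (T := T) u Set.univ MeasurableSet.univ, urep_ae hT hu] with ω h1 h2
  rw [h1, Set.indicator_univ]
  exact h2

lemma cutE_empty {u : E} (hu : 0 ≤ u) : cutE hT hu ∅ MeasurableSet.empty = 0 := by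
  apply T_inj hT
  rw [T_cutE hT hu, map_zero]
  apply AEEqFun.ext
  have h0 : ((0 : Ω →ₘ[μ] ℝ) : Ω → ℝ) =ᵐ[μ] fun _ => 0 := AEEqFun.coeFn_zero
  filter_upwards [cutL_coe (T := T) u ∅ MeasurableSet.empty, h0] with ω h1 h2
  rw [h1, h2, Set.indicator_empty]

lemma cutE_mono {u : E} (hu : 0 ≤ u) {A B : Set Ω} (hA : MeasurableSet A)
    (hB : MeasurableSet B) (hAB : A ⊆ B) : cutE hT hu A hA ≤ cutE hT hu B hB := by
  rw [le_iff_ae hT, T_cutE hT hu, T_cutE hT hu]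
  filter_upwards [cutL_coe (T := T) u A hA, cutL_coe (T := T) u B hB] with ω h1 h2
  rw [h1, h2]
  exact Set.indicator_le_indicator_of_subset hAB (fun x => urep_nonneg u x) ω

lemma cutE_add_of_disjoint {u : E} (hu : 0 ≤ u) {A B : Set Ω} (hA : MeasurableSet A)
    (hB : MeasurableSet B) (hAB : Disjoint A B) :
    cutE hT hu (A ∪ B) (hA.union hB) = cutE hT hu A hA + cutE hT hu B hB := by
  apply T_inj hT
  rw [map_add, T_cutE hT hu, T_cutE hT hu, T_cutE hT hu]
  apply AEEqFun.ext
  filter_upwards [cutL_coe (T := T) u (A ∪ B) (hA.union hB),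
    AEEqFun.coeFn_add (cutL T u A hA) (cutL T u B hB),
    cutL_coe (T := T) u A hA, cutL_coe (T := T) u B hB] with ω h1 h2 h3 h4
  rw [h1, h2]
  simp only [Pi.add_apply]
  rw [h3, h4, Set.indicator_union_of_disjoint hAB]

lemma cutE_smul_le {u v : E} (hu : 0 ≤ u) (hv : 0 ≤ v) (b : ℝ) (hb : 0 ≤ b)
    (huv : b • u ≤ v) (A : Set Ω) (hA : MeasurableSet A) :
    b • cutE hT hu A hA ≤ cutE hT hv A hA := by
  rw [le_iff_ae hT, T.map_smul, T_cutE hT hu A hA, T_cutE hT hv A hA]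
  have hbu := (le_iff_ae hT).mp huv
  rw [T.map_smul] at hbu
  filter_upwards [AEEqFun.coeFn_smul b (cutL T u A hA), cutL_coe (T := T) u A hA,
    cutL_coe (T := T) v A hA, hbu, AEEqFun.coeFn_smul b (T u), urep_ae hT hu, urep_ae hT hv]
    with ω h1 h2 h3 h4 h5 h6 h7
  rw [h1]
  simp only [Pi.smul_apply, smul_eq_mul]
  rw [h2, h3]
  by_cases hω : ω ∈ A
  · rw [Set.indicator_of_mem hω, Set.indicator_of_mem hω, h6, h7]
    rw [h5] at h4
    simpa using h4
  · rw [Set.indicator_of_notMem hω, Set.indicator_of_notMem hω, mul_zero]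


lemma cutE_congr {u : E} (hu : 0 ≤ u) {A B : Set Ω} (hA : MeasurableSet A)
    (h : A = B) : cutE hT hu A hA = cutE hT hu B (h ▸ hA) := by
  subst h; rfl

omit hT in
lemma lin_abs_le (f : E →ₗ[ℝ] ℝ) (hpos : ∀ x : E, 0 ≤ x → 0 ≤ f x) (x : E) :
    |f x| ≤ f |x| := by
  have hmono : ∀ a b : E, a ≤ b → f a ≤ f b := by
    intro a b hab
    have : 0 ≤ f (b - a) := hpos _ (by simpa using hab)
    rw [map_sub] at this; linarith
  rcases abs_cases (f x) with ⟨h, _⟩ | ⟨h, _⟩ <;> rw [h]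
  · exact hmono _ _ (le_abs_self x)
  · rw [← map_neg]; exact hmono _ _ (neg_le_abs x)

omit hT in
lemma lin_mono (f : E →ₗ[ℝ] ℝ) (hpos : ∀ x : E, 0 ≤ x → 0 ≤ f x) {a b : E} (hab : a ≤ b) :
    f a ≤ f b := by
  have : 0 ≤ f (b - a) := hpos _ (by simpa using hab)
  rw [map_sub] at this; linarith

lemma cut_tendsto (f : E →ₗ[ℝ] ℝ) (hoc : OrderContinuousFun ⇑f)
    {u : E} (hu : 0 ≤ u) (A : ℕ → Set Ω) (hA : ∀ i, MeasurableSet (A i))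
    (hmono : Monotone A) :
    Tendsto (fun n => f (cutE hT hu (A n) (hA n))) atTop
      (nhds (f (cutE hT hu (⋃ i, A i) (MeasurableSet.iUnion hA)))) := by
  set B := ⋃ i, A i with hB
  set e : E := cutE hT hu B (MeasurableSet.iUnion hA) with he
  have hle : ∀ n, cutE hT hu (A n) (hA n) ≤ e :=
    fun n => cutE_mono hT hu _ _ (Set.subset_iUnion A n)
  set y : ULift.{v} ℕ → E := fun n => e - cutE hT hu (A n.down) (hA n.down) with hy
  have hy0 : ∀ n, 0 ≤ y n := fun n => sub_nonneg.mpr (hle n.down)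
  have hanti : Antitone y := by
    intro n m hnm
    simp only [hy]
    have : cutE hT hu (A n.down) (hA n.down) ≤ cutE hT hu (A m.down) (hA m.down) :=
      cutE_mono hT hu _ _ (hmono hnm)
    exact sub_le_sub_left this e
  have hglb : IsGLB (Set.range y) 0 := by
    constructor
    · rintro _ ⟨n, rfl⟩
      exact hy0 n
    · intro w hw
      have hwle : ∀ n : ℕ, w ≤ y (ULift.up n) := fun n => hw ⟨ULift.up n, rfl⟩
      have hae : ∀ n : ℕ, (T w : Ω → ℝ) ≤ᵐ[μ] (T (y (ULift.up n)) : Ω → ℝ) :=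
        fun n => (le_iff_ae hT).mp (hwle n)
      have hall : ∀ᵐ ω ∂μ, ∀ n : ℕ, (T w : Ω → ℝ) ω ≤ (T (y (ULift.up n)) : Ω → ℝ) ω :=
        ae_all_iff.mpr hae
      have hTy : ∀ n : ℕ, (T (y (ULift.up n)) : Ω → ℝ) =ᵐ[μ]
          fun ω => B.indicator (urep T u) ω - (A n).indicator (urep T u) ω := by
        intro n
        have : T (y (ULift.up n)) = cutL T u B (MeasurableSet.iUnion hA) -
            cutL T u (A n) (hA n) := by
          simp only [hy, map_sub, he, T_cutE hT hu]
        rw [this]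
        filter_upwards [AEEqFun.coeFn_sub (cutL T u B (MeasurableSet.iUnion hA))
          (cutL T u (A n) (hA n)), cutL_coe (T := T) u B (MeasurableSet.iUnion hA),
          cutL_coe (T := T) u (A n) (hA n)] with ω h1 h2 h3
        rw [h1]
        simp only [Pi.sub_apply]
        rw [h2, h3]
      have hall2 : ∀ᵐ ω ∂μ, ∀ n : ℕ, (T w : Ω → ℝ) ω ≤
          B.indicator (urep T u) ω - (A n).indicator (urep T u) ω := by
        rw [ae_all_iff]
        intro n
        filter_upwards [hae n, hTy n] with ω h1 h2
        rw [← h2]; exact h1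
      rw [le_iff_ae hT]
      have h0 : ((T (0:E)) : Ω → ℝ) =ᵐ[μ] fun _ => 0 := by
        rw [map_zero]; exact AEEqFun.coeFn_zero
      filter_upwards [hall2, h0] with ω h1 h2
      rw [h2]
      by_cases hω : ω ∈ B
      · obtain ⟨i, hi⟩ := Set.mem_iUnion.mp hω
        have := h1 i
        rw [Set.indicator_of_mem hω, Set.indicator_of_mem hi] at this
        simpa using this
      · have := h1 0
        rw [Set.indicator_of_notMem hω] at this
        have h3 : (0:ℝ) ≤ (A 0).indicator (urep T u) ω :=
          Set.indicator_nonneg (fun x _ => urep_nonneg u x) ω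
        linarith
  have hnet : OrderConvNet y 0 :=
    ⟨y, hanti, hglb, Filter.Eventually.of_forall fun a => by
      rw [sub_zero]; exact le_of_eq (abs_of_nonneg (hy0 a))⟩
  have htend := hoc (ULift.{v} ℕ) inferInstance inferInstance inferInstance y hnet
  have hup : Tendsto (ULift.up : ℕ → ULift.{v} ℕ) atTop atTop := by
    apply tendsto_atTop_atTop_of_monotone
    · intro a b hab; exact hab
    · intro b; exact ⟨b.down, le_refl _⟩
  have hcomp := htend.comp hup
  have heq : ∀ n : ℕ, f (y (ULift.up n)) = f e - f (cutE hT hu (A n) (hA n)) := by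
    intro n; simp only [hy, map_sub]
  have : Tendsto (fun n : ℕ => f e - f (y (ULift.up n))) atTop (nhds (f e - 0)) :=
    tendsto_const_nhds.sub hcomp
  rw [sub_zero] at this
  refine this.congr fun n => ?_
  rw [heq n]; ring

lemma cut_hasSum (f : E →ₗ[ℝ] ℝ) (hoc : OrderContinuousFun ⇑f)
    (hpos : ∀ x : E, 0 ≤ x → 0 ≤ f x) {u : E} (hu : 0 ≤ u)
    (A : ℕ → Set Ω) (hA : ∀ i, MeasurableSet (A i)) (hdisj : Pairwise (Function.onFun Disjoint A)) :
    HasSum (fun i => f (cutE hT hu (A i) (hA i)))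
      (f (cutE hT hu (⋃ i, A i) (MeasurableSet.iUnion hA))) := by
  classical
  set Bn : ℕ → Set Ω := fun n => ⋃ (i : ℕ) (_ : i < n), A i with hBn
  have hBnm : ∀ n, MeasurableSet (Bn n) :=
    fun n => MeasurableSet.iUnion fun i => MeasurableSet.iUnion fun _ => hA i
  have hBmono : Monotone Bn := by
    intro n m hnm
    apply Set.iUnion_mono fun i => ?_
    exact Set.iUnion_subset fun hi => Set.subset_iUnion_of_subset (lt_of_lt_of_le hi hnm)
      (subset_refl _)
  have hBunion : (⋃ n, Bn n) = ⋃ i, A i := by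
    ext ω
    simp only [Set.mem_iUnion, hBn]
    constructor
    · rintro ⟨n, i, _, hi⟩; exact ⟨i, hi⟩
    · rintro ⟨i, hi⟩; exact ⟨i + 1, i, Nat.lt_succ_self i, hi⟩
  have hstep : ∀ n, Bn (n + 1) = Bn n ∪ A n := by
    intro n
    ext ω
    simp only [Set.mem_iUnion, Set.mem_union, hBn, Nat.lt_succ_iff_lt_or_eq]
    constructor
    · rintro ⟨i, hi | rfl, hωi⟩
      · exact Or.inl ⟨i, hi, hωi⟩
      · exact Or.inr hωi
    · rintro (⟨i, hi, hωi⟩ | hω)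
      · exact ⟨i, Or.inl hi, hωi⟩
      · exact ⟨n, Or.inr rfl, hω⟩
  have hBdisj : ∀ n, Disjoint (Bn n) (A n) := by
    intro n
    rw [Set.disjoint_left]
    rintro ω hω hωA
    obtain ⟨i, hi⟩ := Set.mem_iUnion.mp hω
    obtain ⟨hilt, hωi⟩ := by
      simpa using hi
    exact Set.disjoint_left.mp (hdisj (ne_of_lt hilt)) hωi hωA
  have hsum_fin : ∀ n, cutE hT hu (Bn n) (hBnm n) =
      ∑ i ∈ Finset.range n, cutE hT hu (A i) (hA i) := by
    intro n
    induction n with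
    | zero =>
      rw [Finset.range_zero, Finset.sum_empty]
      have h0 : Bn 0 = ∅ := by ext ω; simp [hBn]
      rw [cutE_congr hT hu (hBnm 0) h0]
      exact cutE_empty hT hu
    | succ n ih =>
      rw [Finset.sum_range_succ, ← ih]
      rw [cutE_congr hT hu (hBnm (n+1)) (hstep n)]
      exact cutE_add_of_disjoint hT hu (hBnm n) (hA n) (hBdisj n)
  set t : ℕ → ℝ := fun i => f (cutE hT hu (A i) (hA i)) with ht
  have ht0 : ∀ i, 0 ≤ t i := fun i => hpos _ (cutE_nonneg hT hu _ _)
  have hpart : ∀ n, ∑ i ∈ Finset.range n, t i = f (cutE hT hu (Bn n) (hBnm n)) := by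
    intro n
    rw [hsum_fin n, map_sum]
  have hbound : ∀ n, ∑ i ∈ Finset.range n, t i ≤
      f (cutE hT hu (⋃ i, A i) (MeasurableSet.iUnion hA)) := by
    intro n
    rw [hpart n]
    apply lin_mono f hpos
    apply cutE_mono hT hu
    rw [← hBunion]
    exact Set.subset_iUnion Bn n
  have hsummable : Summable t := summable_of_sum_range_le ht0 hbound
  have htendsto : Tendsto (fun n => f (cutE hT hu (Bn n) (hBnm n))) atTop
      (nhds (f (cutE hT hu (⋃ i, A i) (MeasurableSet.iUnion hA)))) := by
    have := cut_tendsto hT f hoc hu Bn hBnm hBmono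
    rwa [cutE_congr hT hu (MeasurableSet.iUnion hBnm) hBunion] at this
  have h1 : Tendsto (fun n => ∑ i ∈ Finset.range n, t i) atTop
      (nhds (f (cutE hT hu (⋃ i, A i) (MeasurableSet.iUnion hA)))) := by
    refine htendsto.congr fun n => (hpart n).symm
  have h2 := hsummable.hasSum.tendsto_sum_nat
  have h3 := tendsto_nhds_unique h2 h1
  rw [← h3]
  exact hsummable.hasSum

/-- The measure `A ↦ f(u·1_A)`. -/
noncomputable def nuM (hT : IsBFSvia μ E T) (f : E →ₗ[ℝ] ℝ) (hoc : OrderContinuousFun ⇑f)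
    (hpos : ∀ x : E, 0 ≤ x → 0 ≤ f x) {u : E} (hu : 0 ≤ u) : Measure Ω :=
  Measure.ofMeasurable (fun A hA => ENNReal.ofReal (f (cutE hT hu A hA)))
    (by rw [cutE_empty hT hu, map_zero, ENNReal.ofReal_zero])
    (by
      intro A hA hdisj
      have hs := cut_hasSum hT f hoc hpos hu A hA hdisj
      rw [← hs.tsum_eq]
      exact ENNReal.ofReal_tsum_of_nonneg (fun i => hpos _ (cutE_nonneg hT hu _ _))
        hs.summable)

lemma nuM_apply (f : E →ₗ[ℝ] ℝ) (hoc : OrderContinuousFun ⇑f)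
    (hpos : ∀ x : E, 0 ≤ x → 0 ≤ f x) {u : E} (hu : 0 ≤ u) {A : Set Ω}
    (hA : MeasurableSet A) :
    nuM hT f hoc hpos hu A = ENNReal.ofReal (f (cutE hT hu A hA)) :=
  Measure.ofMeasurable_apply A hA

instance nuM_finite (f : E →ₗ[ℝ] ℝ) (hoc : OrderContinuousFun ⇑f)
    (hpos : ∀ x : E, 0 ≤ x → 0 ≤ f x) {u : E} (hu : 0 ≤ u) :
    IsFiniteMeasure (nuM hT f hoc hpos hu) := by
  constructor
  rw [nuM_apply hT f hoc hpos hu MeasurableSet.univ]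
  exact ENNReal.ofReal_lt_top

lemma nuM_ac (f : E →ₗ[ℝ] ℝ) (hoc : OrderContinuousFun ⇑f)
    (hpos : ∀ x : E, 0 ≤ x → 0 ≤ f x) {u : E} (hu : 0 ≤ u) :
    nuM hT f hoc hpos hu ≪ μ := by
  apply Measure.AbsolutelyContinuous.mk
  intro A hA hA0
  rw [nuM_apply hT f hoc hpos hu hA]
  have : cutE hT hu A hA = 0 := by
    apply T_inj hT
    rw [T_cutE hT hu, map_zero]
    apply AEEqFun.ext
    have h0 : ((0 : Ω →ₘ[μ] ℝ) : Ω → ℝ) =ᵐ[μ] fun _ => 0 := AEEqFun.coeFn_zero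
    have hAae : ∀ᵐ ω ∂μ, ω ∉ A := by
      rw [ae_iff]
      simpa using hA0
    filter_upwards [cutL_coe (T := T) u A hA, h0, hAae] with ω h1 h2 h3
    rw [h1, h2, Set.indicator_of_notMem h3]
  rw [this, map_zero, ENNReal.ofReal_zero]


lemma nuM_univ (f : E →ₗ[ℝ] ℝ) (hoc : OrderContinuousFun ⇑f)
    (hpos : ∀ x : E, 0 ≤ x → 0 ≤ f x) {u : E} (hu : 0 ≤ u) :
    nuM hT f hoc hpos hu Set.univ = ENNReal.ofReal (f u) := by
  rw [nuM_apply hT f hoc hpos hu MeasurableSet.univ, cutE_univ hT hu]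

lemma T_inf {x y : E} (hx : 0 ≤ x) (hy : 0 ≤ y) : T (x ⊓ y) = T x ⊓ T y := by
  apply le_antisymm
  · exact le_inf ((hT.ord _ x).mp inf_le_left) ((hT.ord _ y).mp inf_le_right)
  · have habs : |T x ⊓ T y| ≤ |T x| := by
      rw [← AEEqFun.coeFn_le]
      filter_upwards [AEEqFun.coeFn_abs (T x ⊓ T y), AEEqFun.coeFn_abs (T x),
        AEEqFun.coeFn_inf (T x) (T y), nonneg_iff.mp ((T_nonneg hT).mp hx),
        nonneg_iff.mp ((T_nonneg hT).mp hy)] with ω h1 h2 h3 h4 h5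
      rw [h1, h2, h3]
      rw [abs_of_nonneg (le_inf h4 h5), abs_of_nonneg h4]
      exact inf_le_left
    obtain ⟨e, he⟩ := hT.solid (T x ⊓ T y) x habs
    have hex : e ≤ x := (hT.ord e x).mpr (he ▸ inf_le_left)
    have hey : e ≤ y := (hT.ord e y).mpr (he ▸ inf_le_right)
    calc T x ⊓ T y = T e := he.symm
      _ ≤ T (x ⊓ y) := (hT.ord _ _).mp (le_inf hex hey)

omit hT

/-- The support of a measure `ν ≪ μ`. -/
noncomputable def suppS (μ ν : Measure Ω) : Set Ω := {ω | 0 < ν.rnDeriv μ ω}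

lemma suppS_meas (ν : Measure Ω) : MeasurableSet (suppS μ ν) :=
  measurableSet_lt measurable_const (Measure.measurable_rnDeriv ν μ)

lemma suppS_null_iff (ν : Measure Ω) [IsFiniteMeasure ν] (hν : ν ≪ μ) {A : Set Ω}
    (hA : MeasurableSet A) : ν A = 0 ↔ μ (A ∩ suppS μ ν) = 0 := by
  have hrn := Measure.withDensity_rnDeriv_eq ν μ hν
  have h1 : ν A = ∫⁻ ω in A, ν.rnDeriv μ ω ∂μ := by
    conv_lhs => rw [← hrn]
    rw [withDensity_apply _ hA]
  rw [h1, setLIntegral_eq_zero_iff hA (Measure.measurable_rnDeriv ν μ), ae_iff]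
  have hset : {ω | ¬(ω ∈ A → ν.rnDeriv μ ω = 0)} = A ∩ suppS μ ν := by
    ext ω
    simp only [Set.mem_setOf_eq, Set.mem_inter_iff, suppS, pos_iff_ne_zero, ne_eq]
    tauto
  rw [hset]

lemma suppS_diff_null {ν₁ ν₂ : Measure Ω} [IsFiniteMeasure ν₁] [IsFiniteMeasure ν₂]
    (h₁ : ν₁ ≪ μ) (h₂ : ν₂ ≪ μ)
    (hle : ∀ A : Set Ω, MeasurableSet A → ν₂ A = 0 → ν₁ A = 0) :
    μ (suppS μ ν₁ \ suppS μ ν₂) = 0 := by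
  set A := suppS μ ν₁ \ suppS μ ν₂ with hAdef
  have hA : MeasurableSet A := (suppS_meas ν₁).diff (suppS_meas ν₂)
  have h2 : ν₂ A = 0 := by
    rw [suppS_null_iff ν₂ h₂ hA]
    have he : A ∩ suppS μ ν₂ = ∅ := by
      ext ω; simp only [hAdef, Set.mem_inter_iff, Set.mem_diff, Set.mem_empty_iff_false,
        iff_false, not_and]
      tauto
    rw [he, measure_empty]
  have h1 := hle A hA h2
  rw [suppS_null_iff ν₁ h₁ hA] at h1
  have he : A ∩ suppS μ ν₁ = A := by
    ext ω; simp only [hAdef, Set.mem_inter_iff, Set.mem_diff]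
    tauto
  rwa [he] at h1

include hT

lemma nuM_null_mono (f₁ f₂ : E →ₗ[ℝ] ℝ) (hoc₁ : OrderContinuousFun ⇑f₁)
    (hoc₂ : OrderContinuousFun ⇑f₂) (hpos₁ : ∀ x : E, 0 ≤ x → 0 ≤ f₁ x)
    (hpos₂ : ∀ x : E, 0 ≤ x → 0 ≤ f₂ x) {u₁ u₂ : E} (hu₁ : 0 ≤ u₁) (hu₂ : 0 ≤ u₂)
    (a b : ℝ) (ha : 0 < a) (hb : 0 < b)
    (hf : ∀ e : E, 0 ≤ e → a * f₁ e ≤ f₂ e) (huv : b • u₁ ≤ u₂) :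
    ∀ A : Set Ω, MeasurableSet A →
      nuM hT f₂ hoc₂ hpos₂ hu₂ A = 0 → nuM hT f₁ hoc₁ hpos₁ hu₁ A = 0 := by
  intro A hA h2
  rw [nuM_apply hT f₂ hoc₂ hpos₂ hu₂ hA] at h2
  rw [nuM_apply hT f₁ hoc₁ hpos₁ hu₁ hA]
  rw [ENNReal.ofReal_eq_zero] at h2 ⊢
  have hc : b • cutE hT hu₁ A hA ≤ cutE hT hu₂ A hA :=
    cutE_smul_le hT hu₁ hu₂ b hb.le huv A hA
  have h3 : b * f₂ (cutE hT hu₁ A hA) ≤ f₂ (cutE hT hu₂ A hA) := by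
    have := lin_mono f₂ hpos₂ hc
    rwa [LinearMap.map_smul, smul_eq_mul] at this
  have h4 : 0 ≤ f₂ (cutE hT hu₁ A hA) := hpos₂ _ (cutE_nonneg hT hu₁ A hA)
  have h5 : a * f₁ (cutE hT hu₁ A hA) ≤ f₂ (cutE hT hu₁ A hA) :=
    hf _ (cutE_nonneg hT hu₁ A hA)
  have h6 : f₂ (cutE hT hu₁ A hA) ≤ 0 := by nlinarith
  nlinarith

lemma killer (f : E →ₗ[ℝ] ℝ) (hoc : OrderContinuousFun ⇑f)
    (hpos : ∀ x : E, 0 ≤ x → 0 ≤ f x) {u : E} (hu : 0 ≤ u)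
    (w : E) (hw0 : 0 ≤ w) (hfw : f w = 0) :
    ∀ᵐ ω ∂μ, ω ∈ suppS μ (nuM hT f hoc hpos hu) → (T w : Ω → ℝ) ω ≤ 0 := by
  set ν := nuM hT f hoc hpos hu with hν
  set Ak : ℕ → Set Ω := fun k => {ω | urep T u ω ≤ ((k : ℝ) + 1) * (T w : Ω → ℝ) ω} with hAk
  have hAkm : ∀ k, MeasurableSet (Ak k) :=
    fun k => measurableSet_le (urep_meas u) ((T w).measurable.const_mul _)
  have hw0' : ∀ᵐ ω ∂μ, 0 ≤ (T w : Ω → ℝ) ω := nonneg_iff.mp ((T_nonneg hT).mp hw0)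
  have hcut : ∀ k : ℕ, cutE hT hu (Ak k) (hAkm k) ≤ ((k : ℝ) + 1) • w := by
    intro k
    rw [le_iff_ae hT, T_cutE hT hu, T.map_smul]
    filter_upwards [cutL_coe (T := T) u (Ak k) (hAkm k),
      AEEqFun.coeFn_smul ((k : ℝ) + 1) (T w), hw0'] with ω h1 h2 h3
    rw [h1, h2]
    simp only [Pi.smul_apply, smul_eq_mul]
    by_cases hω : ω ∈ Ak k
    · rw [Set.indicator_of_mem hω]
      exact hω
    · rw [Set.indicator_of_notMem hω]
      positivity
  have hν0 : ∀ k : ℕ, ν (Ak k) = 0 := by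
    intro k
    rw [hν, nuM_apply hT f hoc hpos hu (hAkm k), ENNReal.ofReal_eq_zero]
    have h1 := lin_mono f hpos (hcut k)
    rwa [LinearMap.map_smul, smul_eq_mul, hfw, mul_zero] at h1
  have hmu0 : ∀ k : ℕ, μ (Ak k ∩ suppS μ ν) = 0 := by
    intro k
    have := (suppS_null_iff ν (nuM_ac hT f hoc hpos hu) (hAkm k)).mp (hν0 k)
    exact this
  have hae : ∀ᵐ ω ∂μ, ∀ k : ℕ, ω ∉ Ak k ∩ suppS μ ν := by
    rw [ae_all_iff]
    intro k
    exact (measure_eq_zero_iff_ae_notMem).mp (hmu0 k)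
  filter_upwards [hae, hw0'] with ω h1 h3 hS
  by_contra hgpos
  push_neg at hgpos
  obtain ⟨k, hk⟩ := exists_nat_ge (urep T u ω / (T w : Ω → ℝ) ω)
  apply h1 k
  refine ⟨?_, hS⟩
  show urep T u ω ≤ ((k : ℝ) + 1) * (T w : Ω → ℝ) ω
  rw [div_le_iff₀ hgpos] at hk
  nlinarith

lemma supp_urep_pos (f : E →ₗ[ℝ] ℝ) (hoc : OrderContinuousFun ⇑f)
    (hpos : ∀ x : E, 0 ≤ x → 0 ≤ f x) {u : E} (hu : 0 ≤ u) :
    ∀ᵐ ω ∂μ, ω ∈ suppS μ (nuM hT f hoc hpos hu) → 0 < urep T u ω := by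
  set ν := nuM hT f hoc hpos hu with hν
  set A : Set Ω := {ω | urep T u ω ≤ 0} with hA
  have hAm : MeasurableSet A := measurableSet_le (urep_meas u) measurable_const
  have hcut : cutE hT hu A hAm = 0 := by
    apply T_inj hT
    rw [T_cutE hT hu, map_zero]
    apply AEEqFun.ext
    have h0 : ((0 : Ω →ₘ[μ] ℝ) : Ω → ℝ) =ᵐ[μ] fun _ => 0 := AEEqFun.coeFn_zero
    filter_upwards [cutL_coe (T := T) u A hAm, h0] with ω h1 h2
    rw [h1, h2]
    by_cases hω : ω ∈ A
    · rw [Set.indicator_of_mem hω]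
      exact le_antisymm hω (urep_nonneg u ω)
    · rw [Set.indicator_of_notMem hω]
  have hν0 : ν A = 0 := by
    rw [hν, nuM_apply hT f hoc hpos hu hAm, hcut, map_zero, ENNReal.ofReal_zero]
  have hmu0 : μ (A ∩ suppS μ ν) = 0 :=
    (suppS_null_iff ν (nuM_ac hT f hoc hpos hu) hAm).mp hν0
  filter_upwards [measure_eq_zero_iff_ae_notMem.mp hmu0] with ω h1 hS
  by_contra hle
  push_neg at hle
  exact h1 ⟨hle, hS⟩

end BFS

end KYaux

set_option maxHeartbeats 2000000 in
open KYaux in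
/-- Kreps–Yan for `σ(X, Xₙ~)`: in a Banach function space `E`, for every
`σ(E, Eₙ~)`-closed convex cone `C` with `-E₊ ⊆ C` and `C ∩ E₊ = {0}`, there is a strictly
positive order continuous functional `φ` with `φ ≤ 0` on `C`. -/
theorem kreps_yan_orderContinuous
    {m0 : MeasurableSpace Ω} {μ : Measure Ω} [IsProbabilityMeasure μ]
    (E : Type v) [NormedAddCommGroup E] [Lattice E] [HasSolidNorm E] [IsOrderedAddMonoid E] [NormedSpace ℝ E] [CompleteSpace E]
    (T : E →ₗ[ℝ] (Ω →ₘ[μ] ℝ)) (hT : IsBFSvia μ E T)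
    (C : Set E)
    (hclosed : @IsClosed E (weakOCTop E) C)
    (hsmul : ∀ x ∈ C, ∀ r : ℝ, 0 ≤ r → r • x ∈ C)
    (hadd : ∀ x ∈ C, ∀ y ∈ C, x + y ∈ C)
    (hneg : ∀ x : E, 0 ≤ x → -x ∈ C)
    (hint : ∀ x ∈ C, 0 ≤ x → x = 0) :
    ∃ φ : E →ₗ[ℝ] ℝ, OrderContinuousFun ⇑φ ∧ (∀ x : E, 0 < x → 0 < φ x) ∧
      ∀ x ∈ C, φ x ≤ 0 := by
  classical
  have hzeroC : (0 : E) ∈ C := by simpa using hneg 0 le_rfl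
  have hsm : ∀ (c : ℝ) (x : E), 0 ≤ c → 0 ≤ x → 0 ≤ c • x := fun c x => smul_nn hT c x
  -- separation
  have hsep : ∀ x : E, 0 < x → ∃ f : E →ₗ[ℝ] ℝ,
      (OrderContinuousFun ⇑f ∧ (∀ x : E, 0 ≤ x → 0 ≤ f x) ∧ (∀ z ∈ C, f z ≤ 0)) ∧ 0 < f x := by
    intro x hx
    have hxC : x ∉ C := by
      intro hxC
      have := hint x hxC hx.le
      rw [this] at hx
      exact lt_irrefl 0 hx
    obtain ⟨f, hoc, hfC, hfx⟩ := sep hclosed hsmul hadd hzeroC x hxC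
    refine ⟨f, ⟨hoc, ?_, hfC⟩, hfx⟩
    intro z hz
    have := hfC (-z) (hneg z hz)
    rw [map_neg] at this
    linarith
  -- the admissible pairs
  let ι₀ := {p : (E →ₗ[ℝ] ℝ) × E //
    OrderContinuousFun ⇑p.1 ∧ (∀ x : E, 0 ≤ x → 0 ≤ p.1 x) ∧ (∀ z ∈ C, p.1 z ≤ 0) ∧ 0 ≤ p.2}
  have hne : Nonempty ι₀ := ⟨⟨(0, 0),
    Iff.mp (mem_ocSet E) (Submodule.zero_mem _),
    fun x _ => le_rfl, fun z _ => le_rfl, le_rfl⟩⟩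
  let nu : ∀ p : ι₀, Measure Ω := fun p => nuM hT p.1.1 p.2.1 p.2.2.1 p.2.2.2.2
  let S : ι₀ → Set Ω := fun p => suppS μ (nu p)
  let m : ι₀ → ℝ := fun p => (μ (S p)).toReal
  have hm_le1 : ∀ p : ι₀, m p ≤ 1 := by
    intro p
    have h1 : μ (S p) ≤ 1 := prob_le_one
    calc m p ≤ (1 : ENNReal).toReal := ENNReal.toReal_mono (by norm_num) h1
      _ = 1 := by simp
  have hm_bdd : BddAbove (Set.range m) := ⟨1, by rintro r ⟨p, rfl⟩; exact hm_le1 p⟩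
  let sr : ℝ := ⨆ p, m p
  have hex : ∀ n : ℕ, ∃ p : ι₀, sr - 1 / ((n : ℝ) + 1) < m p := by
    intro n
    have h1 : sr - 1 / ((n : ℝ) + 1) < sr := sub_lt_self sr (by positivity)
    exact exists_lt_of_lt_ciSup h1
  choose pseq hpseq using hex
  -- components
  let f_ : ℕ → E →ₗ[ℝ] ℝ := fun n => (pseq n).1.1
  let u_ : ℕ → E := fun n => (pseq n).1.2
  have hoc_ : ∀ n, OrderContinuousFun ⇑(f_ n) := fun n => (pseq n).2.1
  have hpos_ : ∀ n, ∀ x : E, 0 ≤ x → 0 ≤ f_ n x := fun n => (pseq n).2.2.1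
  have hu_ : ∀ n, 0 ≤ u_ n := fun n => (pseq n).2.2.2.2
  -- norm bounds
  choose M hM0 hMb using fun n => pos_bound E hsm (f_ n) (hpos_ n)
  let c : ℕ → ℝ := fun n => (2 : ℝ)⁻¹ ^ n * (1 + M n)⁻¹
  have hc : ∀ n, 0 < c n := fun n => by
    have := hM0 n
    positivity
  have hcM : ∀ n, c n * M n ≤ (2 : ℝ)⁻¹ ^ n := by
    intro n
    have h1 : (0 : ℝ) < 1 + M n := by linarith [hM0 n]
    calc c n * M n = (2 : ℝ)⁻¹ ^ n * ((1 + M n)⁻¹ * M n) := by ring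
      _ ≤ (2 : ℝ)⁻¹ ^ n * 1 := by
          apply mul_le_mul_of_nonneg_left _ (by positivity)
          rw [inv_mul_le_iff₀ h1]
          linarith
      _ = (2 : ℝ)⁻¹ ^ n := mul_one _
  have hsum : ∀ x : E, Summable (fun n => c n * f_ n x) := by
    intro x
    apply Summable.of_norm_bounded (g := fun n => (2 : ℝ)⁻¹ ^ n * ‖x‖)
      ((summable_geometric_of_lt_one (by norm_num) (by norm_num)).mul_right _)
    intro n
    rw [Real.norm_eq_abs, abs_mul, abs_of_nonneg (hc n).le]
    calc c n * |f_ n x| ≤ c n * (M n * ‖x‖) :=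
          mul_le_mul_of_nonneg_left (hMb n x) (hc n).le
      _ = (c n * M n) * ‖x‖ := by ring
      _ ≤ (2 : ℝ)⁻¹ ^ n * ‖x‖ := mul_le_mul_of_nonneg_right (hcM n) (norm_nonneg x)
  -- the combined functional
  let φ₀ : E →ₗ[ℝ] ℝ :=
    { toFun := fun x => ∑' n, c n * f_ n x
      map_add' := by
        intro x y
        have h1 : (fun n => c n * f_ n (x + y)) = fun n => c n * f_ n x + c n * f_ n y := by
          funext n
          rw [map_add]
          ring
        rw [h1]
        exact Summable.tsum_add (hsum x) (hsum y)
      map_smul' := by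
        intro r x
        have h1 : (fun n => c n * f_ n (r • x)) = fun n => r * (c n * f_ n x) := by
          funext n
          rw [LinearMap.map_smul, smul_eq_mul]
          ring
        rw [h1, tsum_mul_left]
        simp }
  have hφ₀apply : ∀ x : E, φ₀ x = ∑' n, c n * f_ n x := fun x => rfl
  have hφ₀pos : ∀ x : E, 0 ≤ x → 0 ≤ φ₀ x := by
    intro x hx
    rw [hφ₀apply]
    exact tsum_nonneg fun n => mul_nonneg (hc n).le (hpos_ n x hx)
  have hφ₀C : ∀ z ∈ C, φ₀ z ≤ 0 := by
    intro z hz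
    rw [hφ₀apply]
    exact tsum_nonpos fun n => mul_nonpos_of_nonneg_of_nonpos (hc n).le ((pseq n).2.2.2.1 z hz)
  have hφ₀term : ∀ (n : ℕ) (x : E), 0 ≤ x → c n * f_ n x ≤ φ₀ x := by
    intro n x hx
    rw [hφ₀apply]
    exact Summable.le_tsum (hsum x) n fun j _ => mul_nonneg (hc j).le (hpos_ j x hx)
  -- order continuity of φ₀
  have hφ₀oc : OrderContinuousFun ⇑φ₀ := by
    intro ι iP iD iN y hy
    letI := iP
    obtain ⟨z, hzA, hzG, hzev⟩ := hy
    obtain ⟨a₀, ha₀⟩ := exists_forall_of_eventually_atTop hzev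
    rw [NormedAddCommGroup.tendsto_nhds_zero]
    intro ε hε
    set B := ‖z a₀‖ with hB
    have hB0 : 0 ≤ B := norm_nonneg _
    have hgeo : Tendsto (fun N : ℕ => ((2 : ℝ)⁻¹) ^ N * (2 * B + 1)) atTop (nhds 0) := by
      have h1 := tendsto_pow_atTop_nhds_zero_of_lt_one
        (by norm_num : (0:ℝ) ≤ 2⁻¹) (by norm_num : (2:ℝ)⁻¹ < 1)
      simpa using h1.mul_const (2 * B + 1)
    obtain ⟨N, hN⟩ : ∃ N : ℕ, ((2 : ℝ)⁻¹) ^ N * (2 * B + 1) < ε / 2 :=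
      (hgeo.eventually (gt_mem_nhds (by positivity : (0:ℝ) < ε / 2))).exists
    have hterm : ∀ n, Tendsto (fun a => c n * f_ n (y a)) atTop (nhds 0) := by
      intro n
      have h1 := hoc_ n ι iP iD iN y ⟨z, hzA, hzG, hzev⟩
      simpa using h1.const_mul (c n)
    have hfin : Tendsto (fun a => ∑ n ∈ Finset.range N, c n * f_ n (y a)) atTop (nhds 0) := by
      have h1 := tendsto_finset_sum (Finset.range N) (fun n _ => hterm n)
      simpa using h1
    have hfin' : ∀ᶠ a in atTop, |∑ n ∈ Finset.range N, c n * f_ n (y a)| < ε / 2 := by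
      have h1 := (NormedAddCommGroup.tendsto_nhds_zero.mp hfin) (ε / 2) (by positivity)
      simpa [Real.norm_eq_abs] using h1
    have hIci : ∀ᶠ a in atTop, a₀ ≤ a := by
      have hle : (atTop : Filter ι) ≤ Filter.principal (Set.Ici a₀) := iInf_le _ a₀
      exact hle (Filter.mem_principal_self _)
    filter_upwards [hfin', hIci] with a h1 h2
    have hya : |y a| ≤ z a₀ := by
      have h3 := ha₀ a h2
      rw [sub_zero] at h3
      exact le_trans h3 (hzA h2)
    have htb : ∀ n, |c n * f_ n (y a)| ≤ (2 : ℝ)⁻¹ ^ n * B := by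
      intro n
      rw [abs_mul, abs_of_nonneg (hc n).le]
      have h3 : |f_ n (y a)| ≤ f_ n |y a| := lin_abs_le (f_ n) (hpos_ n) (y a)
      have h4 : f_ n |y a| ≤ f_ n (z a₀) := lin_mono (f_ n) (hpos_ n) hya
      have h5 : f_ n (z a₀) ≤ M n * B := le_trans (le_abs_self _) (hMb n (z a₀))
      calc c n * |f_ n (y a)| ≤ c n * (M n * B) :=
            mul_le_mul_of_nonneg_left (le_trans h3 (le_trans h4 h5)) (hc n).le
        _ = (c n * M n) * B := by ring
        _ ≤ (2 : ℝ)⁻¹ ^ n * B := mul_le_mul_of_nonneg_right (hcM n) hB0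
    have hsummain := hsum (y a)
    have hsplit := Summable.sum_add_tsum_nat_add (f := fun n => c n * f_ n (y a)) N hsummain
    have hs1 : Summable (fun k => c (k + N) * f_ (k + N) (y a)) :=
      (summable_nat_add_iff N).mpr hsummain
    have hs2 : Summable (fun k : ℕ => (2 : ℝ)⁻¹ ^ (k + N) * B) := by
      have hbase : Summable (fun k : ℕ => ((2 : ℝ)⁻¹ ^ N * B) * (2 : ℝ)⁻¹ ^ k) :=
        (summable_geometric_of_lt_one (by norm_num) (by norm_num)).mul_left _
      refine hbase.congr fun k => ?_
      rw [pow_add]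
      ring
    have htail : |∑' k, c (k + N) * f_ (k + N) (y a)| ≤ (2 : ℝ)⁻¹ ^ N * (2 * B) := by
      have ht1 : |∑' k, c (k + N) * f_ (k + N) (y a)| ≤
          ∑' k, |c (k + N) * f_ (k + N) (y a)| := by
        have hnorm := norm_tsum_le_tsum_norm (f := fun k => c (k + N) * f_ (k + N) (y a))
          (by simpa only [Real.norm_eq_abs] using hs1.abs)
        simpa only [Real.norm_eq_abs] using hnorm
      have ht2 : ∑' k, |c (k + N) * f_ (k + N) (y a)| ≤ ∑' k, (2 : ℝ)⁻¹ ^ (k + N) * B :=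
        Summable.tsum_le_tsum (fun k => htb (k + N)) hs1.abs hs2
      have ht3 : ∑' k : ℕ, (2 : ℝ)⁻¹ ^ (k + N) * B = (2 : ℝ)⁻¹ ^ N * B * (1 - 2⁻¹)⁻¹ := by
        have h4 : (fun k : ℕ => (2 : ℝ)⁻¹ ^ (k + N) * B) =
            fun k : ℕ => ((2 : ℝ)⁻¹ ^ N * B) * (2 : ℝ)⁻¹ ^ k := by
          funext k
          rw [pow_add]
          ring
        rw [h4, tsum_mul_left, tsum_geometric_of_lt_one (by norm_num) (by norm_num)]
      refine le_trans ht1 (le_trans ht2 ?_)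
      rw [ht3]
      have : ((1 : ℝ) - 2⁻¹)⁻¹ = 2 := by norm_num
      rw [this]
      ring_nf
      nlinarith [pow_pos (by norm_num : (0:ℝ) < 2⁻¹) N, hB0]
    have hφval : φ₀ (y a) = (∑ n ∈ Finset.range N, c n * f_ n (y a)) +
        ∑' k, c (k + N) * f_ (k + N) (y a) := by
      rw [hφ₀apply]
      exact hsplit.symm
    rw [Real.norm_eq_abs]
    calc |φ₀ (y a)| ≤ |∑ n ∈ Finset.range N, c n * f_ n (y a)| +
          |∑' k, c (k + N) * f_ (k + N) (y a)| := by
          rw [hφval]; exact abs_add_le _ _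
      _ < ε / 2 + ε / 2 := by
          apply add_lt_add h1
          refine lt_of_le_of_lt htail ?_
          refine lt_of_le_of_lt ?_ hN
          have := pow_pos (by norm_num : (0:ℝ) < 2⁻¹) N
          nlinarith
      _ = ε := add_halves ε
  -- the combined positive vector
  let d : ℕ → ℝ := fun n => (2 : ℝ)⁻¹ ^ n * (1 + ‖u_ n‖)⁻¹
  have hd : ∀ n, 0 < d n := fun n => by positivity
  have hsumu : Summable (fun n => d n • u_ n) := by
    apply Summable.of_norm_bounded (g := fun n => (2 : ℝ)⁻¹ ^ n)
      (summable_geometric_of_lt_one (by norm_num) (by norm_num))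
    intro n
    rw [norm_smul, Real.norm_eq_abs, abs_of_nonneg (hd n).le]
    have h1 : (0 : ℝ) < 1 + ‖u_ n‖ := by positivity
    calc d n * ‖u_ n‖ = (2 : ℝ)⁻¹ ^ n * ((1 + ‖u_ n‖)⁻¹ * ‖u_ n‖) := by ring
      _ ≤ (2 : ℝ)⁻¹ ^ n * 1 := by
          apply mul_le_mul_of_nonneg_left _ (by positivity)
          rw [inv_mul_le_iff₀ h1]
          linarith [norm_nonneg (u_ n)]
      _ = (2 : ℝ)⁻¹ ^ n := mul_one _
  let u₀ : E := ∑' n, d n • u_ n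
  have hu₀ : 0 ≤ u₀ := tsum_nonneg fun n => hsm _ _ (hd n).le (hu_ n)
  have hu₀n : ∀ n, d n • u_ n ≤ u₀ :=
    fun n => Summable.le_tsum hsumu n fun j _ => hsm _ _ (hd j).le (hu_ j)
  -- the maximal pair
  let p₀ : ι₀ := ⟨(φ₀, u₀), hφ₀oc, hφ₀pos, hφ₀C, hu₀⟩
  have hS0n : ∀ n, μ (S (pseq n) \ S p₀) = 0 := by
    intro n
    apply suppS_diff_null (nuM_ac hT _ _ _ _) (nuM_ac hT _ _ _ _)
    exact nuM_null_mono hT (f_ n) φ₀ (hoc_ n) hφ₀oc (hpos_ n) hφ₀pos (hu_ n) hu₀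
      (c n) (d n) (hc n) (hd n) (fun e he => hφ₀term n e he) (hu₀n n)
  have hmono_n : ∀ n, μ (S (pseq n)) ≤ μ (S p₀) := by
    intro n
    calc μ (S (pseq n)) ≤ μ (S p₀ ∪ (S (pseq n) \ S p₀)) := by
          apply measure_mono
          intro ω hω
          by_cases h : ω ∈ S p₀
          · exact Or.inl h
          · exact Or.inr ⟨hω, h⟩
      _ ≤ μ (S p₀) + μ (S (pseq n) \ S p₀) := measure_union_le _ _
      _ = μ (S p₀) := by rw [hS0n n, add_zero]
  have hsr_le : sr ≤ m p₀ := by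
    by_contra hlt
    push_neg at hlt
    obtain ⟨n, hn⟩ := exists_nat_one_div_lt (show (0:ℝ) < sr - m p₀ by linarith)
    have h1 := hpseq n
    have h2 : m (pseq n) ≤ m p₀ := ENNReal.toReal_mono (measure_ne_top μ _) (hmono_n n)
    linarith
  -- conclusion
  refine ⟨φ₀, hφ₀oc, ?_, hφ₀C⟩
  intro x hx
  rcases lt_or_eq_of_le (hφ₀pos x hx.le) with hlt | heq
  · exact hlt
  exfalso
  have hφx : φ₀ x = 0 := heq.symm
  obtain ⟨h, ⟨hhoc, hhpos, hhC⟩, hhx⟩ := hsep x hx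
  let q1 : ι₀ := ⟨(h, x), hhoc, hhpos, hhC, hx.le⟩
  have hp'oc : OrderContinuousFun ⇑(φ₀ + h) :=
    Iff.mp (mem_ocSet E) (Submodule.add_mem _ (Iff.mpr (mem_ocSet E) hφ₀oc) (Iff.mpr (mem_ocSet E) hhoc))
  have hp'pos : ∀ w : E, 0 ≤ w → 0 ≤ (φ₀ + h) w := by
    intro w hw
    rw [LinearMap.add_apply]
    exact add_nonneg (hφ₀pos w hw) (hhpos w hw)
  have hp'C : ∀ z ∈ C, (φ₀ + h) z ≤ 0 := by
    intro z hz
    rw [LinearMap.add_apply]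
    exact add_nonpos (hφ₀C z hz) (hhC z hz)
  let p' : ι₀ := ⟨(φ₀ + h, u₀ + x), hp'oc, hp'pos, hp'C, add_nonneg hu₀ hx.le⟩
  -- support inclusions
  have hincl0 : μ (S p₀ \ S p') = 0 := by
    apply suppS_diff_null (nuM_ac hT _ _ _ _) (nuM_ac hT _ _ _ _)
    apply nuM_null_mono hT φ₀ (φ₀ + h) hφ₀oc hp'oc hφ₀pos hp'pos hu₀ (add_nonneg hu₀ hx.le)
      1 1 one_pos one_pos
    · intro e he
      rw [one_mul, LinearMap.add_apply]
      linarith [hhpos e he]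
    · rw [one_smul]
      exact le_add_of_nonneg_right hx.le
  have hincl1 : μ (S q1 \ S p') = 0 := by
    apply suppS_diff_null (nuM_ac hT _ _ _ _) (nuM_ac hT _ _ _ _)
    apply nuM_null_mono hT h (φ₀ + h) hhoc hp'oc hhpos hp'pos hx.le (add_nonneg hu₀ hx.le)
      1 1 one_pos one_pos
    · intro e he
      rw [one_mul, LinearMap.add_apply]
      linarith [hφ₀pos e he]
    · rw [one_smul]
      exact le_add_of_nonneg_left hu₀
  -- μ (S q1) > 0
  have hS1pos : 0 < μ (S q1) := by
    rw [pos_iff_ne_zero]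
    intro hzero
    have h1 : μ (Set.univ ∩ S q1) = 0 := by
      rw [Set.univ_inter]; exact hzero
    have h2 := (suppS_null_iff (nu q1) (nuM_ac hT _ _ _ _) MeasurableSet.univ).mpr h1
    rw [show nu q1 = nuM hT h hhoc hhpos hx.le from rfl, nuM_univ hT h hhoc hhpos hx.le] at h2
    rw [ENNReal.ofReal_eq_zero] at h2
    linarith
  -- a.e. on S p₀ the representative of T x is ≤ 0
  have hw0 : (0 : E) ≤ x ⊓ u₀ := le_inf hx.le hu₀
  have hφw : φ₀ (x ⊓ u₀) = 0 := by
    apply le_antisymm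
    · calc φ₀ (x ⊓ u₀) ≤ φ₀ x := lin_mono φ₀ hφ₀pos inf_le_left
        _ = 0 := hφx
    · exact hφ₀pos _ hw0
  have hk := killer hT φ₀ hφ₀oc hφ₀pos hu₀ (x ⊓ u₀) hw0 hφw
  have hup0 := supp_urep_pos hT φ₀ hφ₀oc hφ₀pos hu₀
  have hTinf : T (x ⊓ u₀) = T x ⊓ T u₀ := T_inf hT hx.le hu₀
  have hS0x : ∀ᵐ ω ∂μ, ω ∈ S p₀ → (T x : Ω → ℝ) ω ≤ 0 := by
    have hcoe : (T (x ⊓ u₀) : Ω → ℝ) =ᵐ[μ]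
        fun ω => ((T x : Ω → ℝ) ω) ⊓ ((T u₀ : Ω → ℝ) ω) := by
      rw [hTinf]
      exact AEEqFun.coeFn_inf _ _
    filter_upwards [hk, hup0, hcoe, urep_ae hT hu₀] with ω h1 h2 h3 h4
    intro hS
    have h5 := h1 hS
    rw [h3] at h5
    have h6 := h2 hS
    rw [h4] at h6
    by_contra h7
    push_neg at h7
    have h8 := lt_inf_iff.mpr ⟨h7, h6⟩
    linarith
  have hS1x : ∀ᵐ ω ∂μ, ω ∈ S q1 → 0 < (T x : Ω → ℝ) ω := by
    have hup1 := supp_urep_pos hT h hhoc hhpos hx.le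
    filter_upwards [hup1, urep_ae hT hx.le] with ω h1 h2 hS
    have := h1 hS
    rwa [h2] at this
  have hS01 : μ (S p₀ ∩ S q1) = 0 := by
    rw [measure_eq_zero_iff_ae_notMem]
    filter_upwards [hS0x, hS1x] with ω h1 h2 hmem
    have h3 := h1 hmem.1
    have h4 := h2 hmem.2
    linarith
  -- measure arithmetic
  have hmS0 : MeasurableSet (S p₀) := suppS_meas _
  have hmS1 : MeasurableSet (S q1) := suppS_meas _
  have hd10 : μ (S q1 \ S p₀) = μ (S q1) := by
    apply le_antisymm (measure_mono Set.diff_subset)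
    calc μ (S q1) = μ ((S q1 \ S p₀) ∪ (S q1 ∩ S p₀)) := by rw [Set.diff_union_inter]
      _ ≤ μ (S q1 \ S p₀) + μ (S q1 ∩ S p₀) := measure_union_le _ _
      _ = μ (S q1 \ S p₀) := by rw [Set.inter_comm, hS01, add_zero]
  have hU : μ (S p₀) + μ (S q1) ≤ μ (S p₀ ∪ S q1) := by
    have heq : μ (S p₀) + μ (S q1 \ S p₀) = μ (S p₀ ∪ S q1) := by
      rw [← measure_union Set.disjoint_sdiff_right (hmS1.diff hmS0), Set.union_diff_self]
    rw [← hd10]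
    exact le_of_eq heq
  have hUle : μ (S p₀ ∪ S q1) ≤ μ (S p') := by
    calc μ (S p₀ ∪ S q1) ≤ μ (S p' ∪ ((S p₀ \ S p') ∪ (S q1 \ S p'))) := by
          apply measure_mono
          intro ω hω
          by_cases hp : ω ∈ S p'
          · exact Or.inl hp
          · rcases hω with hω | hω
            · exact Or.inr (Or.inl ⟨hω, hp⟩)
            · exact Or.inr (Or.inr ⟨hω, hp⟩)
      _ ≤ μ (S p') + μ ((S p₀ \ S p') ∪ (S q1 \ S p')) := measure_union_le _ _
      _ ≤ μ (S p') + (μ (S p₀ \ S p') + μ (S q1 \ S p')) := by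
          gcongr
          exact measure_union_le _ _
      _ = μ (S p') := by rw [hincl0, hincl1, add_zero, add_zero]
  -- contradiction via the supremum
  have hfin : ∀ s : Set Ω, μ s ≠ ⊤ := fun s => measure_ne_top μ s
  have hmp' : m p₀ + (μ (S q1)).toReal ≤ m p' := by
    have h1 : μ (S p₀) + μ (S q1) ≤ μ (S p') := le_trans hU hUle
    have h2 := ENNReal.toReal_mono (hfin _) h1
    rwa [ENNReal.toReal_add (hfin _) (hfin _)] at h2
  have hq1pos : 0 < (μ (S q1)).toReal := ENNReal.toReal_pos (ne_of_gt hS1pos) (hfin _)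
  have hle_sr : m p' ≤ sr := le_ciSup hm_bdd p'
  linarith
end
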